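/- arXiv:1804.08116 — 7 statements merged into one kernel-verified Lean document; each statement's English description precedes it below -/
import Mathlib

section
/- Constrained risk inequality (convex case): Let P₀, P₁ be probability measures on Z with P₁ ≪ P₀, ℓ : ℝ≥0 → ℝ≥0 convex and non-decreasing, and θ₀, θ₁ ∈ ℝ^k. Define Δ = 2ℓ(‖θ₀ - θ₁‖/2) and I = ∫(dP₁/dP₀)² dP₀. If a measurable estimator θ̂ : Z → ℝ^k satisfies E_{P₀}[ℓ(‖θ̂ - θ₀‖)] ≤ δ, then E_{P₁}[ℓ(‖θ̂ - θ₁‖)] ≥ (max(Δ^{1/2} - (I·δ)^{1/2}, 0))². -/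
open MeasureTheory

theorem constrained_risk_inequality_convex {Z : Type*} [MeasurableSpace Z]
    (P₀ P₁ : Measure Z) [IsProbabilityMeasure P₀] [IsProbabilityMeasure P₁]
    (hac : P₁ ≪ P₀)
    (ℓ : ℝ → ℝ) (hconv : ConvexOn ℝ (Set.Ici 0) ℓ)
    (hmono : MonotoneOn ℓ (Set.Ici 0)) (hnonneg : ∀ x ∈ Set.Ici (0 : ℝ), 0 ≤ ℓ x)
    {k : ℕ} (θ₀ θ₁ : EuclideanSpace ℝ (Fin k))
    (θhat : Z → EuclideanSpace ℝ (Fin k)) (hmeas : Measurable θhat) (δ : ℝ)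
    (hI : Integrable (fun z => ((P₁.rnDeriv P₀ z).toReal) ^ 2) P₀)
    (hint₀ : Integrable (fun z => ℓ ‖θhat z - θ₀‖) P₀)
    (hint₁ : Integrable (fun z => ℓ ‖θhat z - θ₁‖) P₁)
    (hrisk : ∫ z, ℓ ‖θhat z - θ₀‖ ∂P₀ ≤ δ) :
    (max (Real.sqrt (2 * ℓ (‖θ₀ - θ₁‖ / 2)) -
        Real.sqrt ((∫ z, ((P₁.rnDeriv P₀ z).toReal) ^ 2 ∂P₀) * δ)) 0) ^ 2
      ≤ ∫ z, ℓ ‖θhat z - θ₁‖ ∂P₁ := by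
  set f : Z → ℝ := fun z => ℓ ‖θhat z - θ₀‖ with hf_def
  set g : Z → ℝ := fun z => ℓ ‖θhat z - θ₁‖ with hg_def
  set r : Z → ℝ := fun z => ((P₁.rnDeriv P₀ z).toReal) with hr_def
  have hf0 : ∀ z, 0 ≤ f z := fun z => hnonneg _ (norm_nonneg _)
  have hg0 : ∀ z, 0 ≤ g z := fun z => hnonneg _ (norm_nonneg _)
  have hr0 : ∀ z, 0 ≤ r z := fun z => ENNReal.toReal_nonneg
  set Δ : ℝ := 2 * ℓ (‖θ₀ - θ₁‖ / 2) with hΔ_def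
  set I : ℝ := ∫ z, r z ^ 2 ∂P₀ with hI_def
  set R₁ : ℝ := ∫ z, g z ∂P₁ with hR_def
  have hΔ0 : 0 ≤ Δ := by
    have := hnonneg (‖θ₀ - θ₁‖ / 2) (Set.mem_Ici.mpr (by positivity))
    simp only [hΔ_def]; linarith
  have hI0 : 0 ≤ I := integral_nonneg fun z => sq_nonneg _
  have hR0 : 0 ≤ R₁ := integral_nonneg hg0
  have hδ0 : 0 ≤ δ := le_trans (integral_nonneg hf0) hrisk
  -- pointwise inequality
  have hpoint : ∀ z, Δ ≤ f z + g z := by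
    intro z
    set a := ‖θhat z - θ₀‖ with ha_def
    set b := ‖θhat z - θ₁‖ with hb_def
    have ha0 : (0:ℝ) ≤ a := norm_nonneg _
    have hb0 : (0:ℝ) ≤ b := norm_nonneg _
    have hab : ‖θ₀ - θ₁‖ ≤ a + b := by
      have h : θ₀ - θ₁ = (θ₀ - θhat z) + (θhat z - θ₁) := by abel
      calc ‖θ₀ - θ₁‖ = ‖(θ₀ - θhat z) + (θhat z - θ₁)‖ := by rw [← h]
        _ ≤ ‖θ₀ - θhat z‖ + ‖θhat z - θ₁‖ := norm_add_le _ _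
        _ = a + b := by rw [norm_sub_rev]
    have h1 : ℓ (‖θ₀ - θ₁‖ / 2) ≤ ℓ ((a + b) / 2) :=
      hmono (Set.mem_Ici.mpr (by positivity)) (Set.mem_Ici.mpr (by positivity)) (by linarith)
    have h2 : ℓ ((a + b) / 2) ≤ (1/2 : ℝ) * ℓ a + (1/2 : ℝ) * ℓ b := by
      have h := hconv.2 (Set.mem_Ici.mpr ha0) (Set.mem_Ici.mpr hb0)
        (by norm_num : (0:ℝ) ≤ (1/2:ℝ)) (by norm_num : (0:ℝ) ≤ (1/2:ℝ)) (by norm_num)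
      simp only [smul_eq_mul] at h
      have e : (1/2:ℝ) * a + (1/2:ℝ) * b = (a + b) / 2 := by ring
      rwa [e] at h
    simp only [hΔ_def, hf_def, hg_def]
    linarith
  have hsqrtpoint : ∀ z, Real.sqrt Δ ≤ Real.sqrt (f z) + Real.sqrt (g z) := by
    intro z
    have h1 : Real.sqrt Δ ≤ Real.sqrt (f z + g z) := Real.sqrt_le_sqrt (hpoint z)
    refine h1.trans ?_
    have hs := Real.sq_sqrt (hf0 z)
    have hs' := Real.sq_sqrt (hg0 z)
    have := Real.sqrt_nonneg (f z)
    have := Real.sqrt_nonneg (g z)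
    nlinarith [Real.sq_sqrt (add_nonneg (hf0 z) (hg0 z)),
      Real.sqrt_nonneg (f z + g z), mul_nonneg (Real.sqrt_nonneg (f z)) (Real.sqrt_nonneg (g z))]
  -- measurability / integrability
  have hfm₀ : AEStronglyMeasurable f P₀ := hint₀.1
  have hgm₁ : AEStronglyMeasurable g P₁ := hint₁.1
  have hrm : Measurable r := (Measure.measurable_rnDeriv P₁ P₀).ennreal_toReal
  have h_sqf_L2 : MemLp (fun z => Real.sqrt (f z)) 2 P₀ := by
    rw [memLp_two_iff_integrable_sq (Real.continuous_sqrt.comp_aestronglyMeasurable hfm₀)]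
    exact hint₀.congr (Filter.Eventually.of_forall fun z => (Real.sq_sqrt (hf0 z)).symm)
  have h_sqg_L2 : MemLp (fun z => Real.sqrt (g z)) 2 P₁ := by
    rw [memLp_two_iff_integrable_sq (Real.continuous_sqrt.comp_aestronglyMeasurable hgm₁)]
    exact hint₁.congr (Filter.Eventually.of_forall fun z => (Real.sq_sqrt (hg0 z)).symm)
  have h_r_L2 : MemLp r 2 P₀ := by
    rw [memLp_two_iff_integrable_sq hrm.aestronglyMeasurable]
    exact hI
  have hofReal2 : (ENNReal.ofReal 2) = 2 := by norm_num
  have hpq : Real.HolderConjugate 2 2 := Real.HolderConjugate.two_two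
  -- Cauchy-Schwarz on P₀
  have hCS : ∫ z, r z * Real.sqrt (f z) ∂P₀ ≤
      Real.sqrt I * Real.sqrt (∫ z, f z ∂P₀) := by
    have h := integral_mul_le_Lp_mul_Lq_of_nonneg (μ := P₀) hpq
      (Filter.Eventually.of_forall hr0)
      (Filter.Eventually.of_forall fun z => Real.sqrt_nonneg (f z))
      (hofReal2 ▸ h_r_L2) (hofReal2 ▸ h_sqf_L2)
    have e1 : (∫ z, r z ^ (2:ℝ) ∂P₀) = I := by
      rw [hI_def]; congr 1; funext z; rw [Real.rpow_two]
    have e2 : (∫ z, Real.sqrt (f z) ^ (2:ℝ) ∂P₀) = ∫ z, f z ∂P₀ := by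
      congr 1; funext z; rw [Real.rpow_two, Real.sq_sqrt (hf0 z)]
    rw [e1, e2] at h
    calc ∫ z, r z * Real.sqrt (f z) ∂P₀
        ≤ I ^ (1/2 : ℝ) * (∫ z, f z ∂P₀) ^ (1/2 : ℝ) := h
      _ = Real.sqrt I * Real.sqrt (∫ z, f z ∂P₀) := by
          rw [Real.sqrt_eq_rpow, Real.sqrt_eq_rpow]
  -- Cauchy-Schwarz on P₁ with constant 1
  have hCSg : ∫ z, Real.sqrt (g z) ∂P₁ ≤ Real.sqrt R₁ := by
    have h := integral_mul_le_Lp_mul_Lq_of_nonneg (μ := P₁) hpq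
      (Filter.Eventually.of_forall fun _ => (zero_le_one : (0:ℝ) ≤ 1))
      (Filter.Eventually.of_forall fun z => Real.sqrt_nonneg (g z))
      (hofReal2 ▸ (memLp_const (1:ℝ) : MemLp (fun _ : Z => (1:ℝ)) 2 P₁))
      (hofReal2 ▸ h_sqg_L2)
    have e0 : (∫ z, (fun _ : Z => (1:ℝ)) z * Real.sqrt (g z) ∂P₁)
        = ∫ z, Real.sqrt (g z) ∂P₁ := by simp
    have e1 : (∫ _ : Z, (1:ℝ) ^ (2:ℝ) ∂P₁) = 1 := by simp
    have e2 : (∫ z, Real.sqrt (g z) ^ (2:ℝ) ∂P₁) = R₁ := by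
      rw [hR_def]; congr 1; funext z; rw [Real.rpow_two, Real.sq_sqrt (hg0 z)]
    rw [e0, e1, e2] at h
    calc ∫ z, Real.sqrt (g z) ∂P₁
        ≤ (1:ℝ) ^ (1/2 : ℝ) * R₁ ^ (1/2 : ℝ) := h
      _ = Real.sqrt R₁ := by rw [Real.one_rpow, one_mul, Real.sqrt_eq_rpow]
  -- change of measure
  have hchg : ∫ z, Real.sqrt (f z) ∂P₁ = ∫ z, r z * Real.sqrt (f z) ∂P₀ := by
    have := integral_rnDeriv_smul (μ := P₁) (ν := P₀) hac
      (f := fun z => Real.sqrt (f z))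
    simp only [smul_eq_mul] at this
    exact this.symm
  -- integrability of sqrt f wrt P₁ and sqrt g wrt P₁
  have h_rsqf_int : Integrable (fun z => r z * Real.sqrt (f z)) P₀ := by
    have h := h_sqf_L2.smul (r := 1) h_r_L2
      (hpqr := ⟨by rw [ENNReal.inv_two_add_inv_two, inv_one]⟩)
    rw [memLp_one_iff_integrable] at h
    simpa [smul_eq_mul, Pi.mul_def] using h
  have h_sqf_int₁ : Integrable (fun z => Real.sqrt (f z)) P₁ := by
    rw [← integrable_rnDeriv_smul_iff hac]
    simpa [smul_eq_mul] using h_rsqf_int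
  have h_sqg_int₁ : Integrable (fun z => Real.sqrt (g z)) P₁ :=
    h_sqg_L2.integrable one_le_two
  -- integrate the pointwise sqrt inequality over P₁
  have hmain : Real.sqrt Δ ≤ ∫ z, (Real.sqrt (f z) + Real.sqrt (g z)) ∂P₁ := by
    have h1 : Real.sqrt Δ = ∫ _ : Z, Real.sqrt Δ ∂P₁ := by simp
    rw [h1]
    exact integral_mono (integrable_const _) (h_sqf_int₁.add h_sqg_int₁)
      fun z => hsqrtpoint z
  rw [integral_add h_sqf_int₁ h_sqg_int₁] at hmain
  have hfP₀ : ∫ z, Real.sqrt (f z) ∂P₁ ≤ Real.sqrt (I * δ) := by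
    rw [hchg]
    refine hCS.trans ?_
    rw [Real.sqrt_mul hI0]
    exact mul_le_mul_of_nonneg_left (Real.sqrt_le_sqrt hrisk) (Real.sqrt_nonneg _)
  have hkey : Real.sqrt Δ ≤ Real.sqrt (I * δ) + Real.sqrt R₁ := by
    calc Real.sqrt Δ ≤ (∫ z, Real.sqrt (f z) ∂P₁) + ∫ z, Real.sqrt (g z) ∂P₁ := hmain
      _ ≤ Real.sqrt (I * δ) + Real.sqrt R₁ := add_le_add hfP₀ hCSg
  -- conclude
  have h1 : max (Real.sqrt Δ - Real.sqrt (I * δ)) 0 ≤ Real.sqrt R₁ :=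
    max_le (by linarith) (Real.sqrt_nonneg _)
  calc (max (Real.sqrt Δ - Real.sqrt (I * δ)) 0) ^ 2
      ≤ Real.sqrt R₁ ^ 2 := pow_le_pow_left₀ (le_max_right _ _) h1 2
    _ = R₁ := Real.sq_sqrt hR0
end

section
/- Constrained risk inequality (general losses): Let P₀, P₁ be probability measures on Z with P₁ ≪ P₀, ℓ : ℝ≥0 → ℝ≥0 non-decreasing (not necessarily convex), and θ₀, θ₁ ∈ ℝ^k. Define Δ = ℓ(‖θ₀ - θ₁‖/2) and I = ∫(dP₁/dP₀)² dP₀. If E_{P₀}[ℓ(‖θ̂ - θ₀‖)] ≤ δ for a measurable θ̂ : Z → ℝ^k, then E_{P₁}[ℓ(‖θ̂ - θ₁‖)] ≥ (max(Δ^{1/2} - (I·δ)^{1/2}, 0))². -/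
open MeasureTheory

lemma my_cauchy_schwarz {α : Type*} [MeasurableSpace α] (μ : Measure α) (f g : α → ℝ)
    (hf0 : ∀ x, 0 ≤ f x) (hg0 : ∀ x, 0 ≤ g x)
    (hf2 : Integrable (fun x => f x ^ 2) μ) (hg2 : Integrable (fun x => g x ^ 2) μ)
    (hfg : Integrable (fun x => f x * g x) μ) :
    ∫ x, f x * g x ∂μ ≤ Real.sqrt (∫ x, f x ^ 2 ∂μ) * Real.sqrt (∫ x, g x ^ 2 ∂μ) := by
  set A := ∫ x, f x ^ 2 ∂μ with hA
  set B := ∫ x, g x ^ 2 ∂μ with hB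
  have hA0 : 0 ≤ A := integral_nonneg fun x => sq_nonneg _
  have hB0 : 0 ≤ B := integral_nonneg fun x => sq_nonneg _
  have key : ∀ t : ℝ, 0 < t → ∫ x, f x * g x ∂μ ≤ (t * A + B / t) / 2 := by
    intro t ht
    have hpt : ∀ x, f x * g x ≤ (t * f x ^ 2 + g x ^ 2 / t) / 2 := by
      intro x
      have h := sq_nonneg (t * f x - g x)
      have h2 : t * (g x ^ 2 / t) = g x ^ 2 := mul_div_cancel₀ _ (ne_of_gt ht)
      nlinarith [mul_pos ht ht]
    have hbi : Integrable (fun x => (t * f x ^ 2 + g x ^ 2 / t) / 2) μ :=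
      ((hf2.const_mul t).add (hg2.div_const t)).div_const 2
    calc ∫ x, f x * g x ∂μ ≤ ∫ x, (t * f x ^ 2 + g x ^ 2 / t) / 2 ∂μ :=
          integral_mono hfg hbi hpt
      _ = (t * A + B / t) / 2 := by
          rw [integral_div, integral_add (hf2.const_mul t) (hg2.div_const t),
            integral_const_mul, integral_div]
  by_cases hAz : A = 0
  · rw [hAz, Real.sqrt_zero, zero_mul]
    by_contra h
    push_neg at h
    set c := ∫ x, f x * g x ∂μ
    have ht : (0:ℝ) < B / c + 1 := by positivity
    have := key (B / c + 1) ht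
    rw [hAz, mul_zero, zero_add] at this
    have hBc : B / (B / c + 1) < c := by
      rw [div_lt_iff₀ ht]
      have hcb : c * (B / c) = B := mul_div_cancel₀ _ (ne_of_gt h)
      nlinarith
    linarith
  · have hApos : 0 < A := lt_of_le_of_ne hA0 (Ne.symm hAz)
    by_cases hBz : B = 0
    · rw [hBz, Real.sqrt_zero, mul_zero]
      by_contra h
      push_neg at h
      set c := ∫ x, f x * g x ∂μ
      have ht : (0:ℝ) < c / A := by positivity
      have := key (c / A) ht
      rw [hBz, zero_div, add_zero] at this
      have : c / A * A = c := div_mul_cancel₀ _ (ne_of_gt hApos)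
      nlinarith [key (c / A) ht]
    · have hBpos : 0 < B := lt_of_le_of_ne hB0 (Ne.symm hBz)
      set a := Real.sqrt A with ha
      set b := Real.sqrt B with hb
      have hap : 0 < a := Real.sqrt_pos.mpr hApos
      have hbp : 0 < b := Real.sqrt_pos.mpr hBpos
      have haA : a ^ 2 = A := Real.sq_sqrt hA0
      have hbB : b ^ 2 = B := Real.sq_sqrt hB0
      have := key (b / a) (by positivity)
      calc ∫ x, f x * g x ∂μ ≤ (b / a * A + B / (b / a)) / 2 := this
        _ = a * b := by
            rw [← haA, ← hbB]
            field_simp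
            ring

theorem constrained_risk_inequality_general {Z : Type*} [MeasurableSpace Z]
    (P₀ P₁ : Measure Z) [IsProbabilityMeasure P₀] [IsProbabilityMeasure P₁]
    (hac : P₁ ≪ P₀)
    (hmono : MonotoneOn ℓ (Set.Ici 0)) (hnonneg : ∀ x ∈ Set.Ici (0 : ℝ), 0 ≤ ℓ x)
    {k : ℕ} (θ₀ θ₁ : EuclideanSpace ℝ (Fin k))
    (θhat : Z → EuclideanSpace ℝ (Fin k)) (hmeas : Measurable θhat) (δ : ℝ)
    (hI : Integrable (fun z => ((P₁.rnDeriv P₀ z).toReal) ^ 2) P₀)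
    (hint₀ : Integrable (fun z => ℓ ‖θhat z - θ₀‖) P₀)
    (hint₁ : Integrable (fun z => ℓ ‖θhat z - θ₁‖) P₁)
    (hrisk : ∫ z, ℓ ‖θhat z - θ₀‖ ∂P₀ ≤ δ) :
    (max (Real.sqrt (ℓ (‖θ₀ - θ₁‖ / 2)) -
        Real.sqrt ((∫ z, ((P₁.rnDeriv P₀ z).toReal) ^ 2 ∂P₀) * δ)) 0) ^ 2
      ≤ ∫ z, ℓ ‖θhat z - θ₁‖ ∂P₁ := by
  set a := ‖θ₀ - θ₁‖ with ha
  set ρ := fun z => (P₁.rnDeriv P₀ z).toReal with hρdef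
  set Iv := ∫ z, ρ z ^ 2 ∂P₀ with hIv
  have hρ0 : ∀ z, 0 ≤ ρ z := fun z => ENNReal.toReal_nonneg
  have hl0 : ∀ z, 0 ≤ ℓ ‖θhat z - θ₀‖ := fun z => hnonneg _ (norm_nonneg _)
  have hl1 : ∀ z, 0 ≤ ℓ ‖θhat z - θ₁‖ := fun z => hnonneg _ (norm_nonneg _)
  have hδ0 : 0 ≤ δ := le_trans (integral_nonneg hl0) hrisk
  have hIv0 : 0 ≤ Iv := integral_nonneg fun z => sq_nonneg _
  have hR0 : 0 ≤ ∫ z, ℓ ‖θhat z - θ₁‖ ∂P₁ := integral_nonneg hl1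
  -- pointwise
  have hpoint : ∀ z, Real.sqrt (ℓ (a / 2)) ≤
      Real.sqrt (ℓ ‖θhat z - θ₀‖) + Real.sqrt (ℓ ‖θhat z - θ₁‖) := by
    intro z
    have htri : a ≤ ‖θhat z - θ₀‖ + ‖θhat z - θ₁‖ := by
      have : θ₀ - θ₁ = (θhat z - θ₁) - (θhat z - θ₀) := by abel
      rw [ha, this]
      calc ‖(θhat z - θ₁) - (θhat z - θ₀)‖ ≤ ‖θhat z - θ₁‖ + ‖θhat z - θ₀‖ :=
            norm_sub_le _ _
        _ = ‖θhat z - θ₀‖ + ‖θhat z - θ₁‖ := by ring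
    have ha2 : (0:ℝ) ≤ a / 2 := by positivity
    rcases le_or_gt (a / 2) ‖θhat z - θ₀‖ with h | h
    · have : ℓ (a / 2) ≤ ℓ ‖θhat z - θ₀‖ := hmono ha2 (norm_nonneg _) h
      calc Real.sqrt (ℓ (a / 2)) ≤ Real.sqrt (ℓ ‖θhat z - θ₀‖) := Real.sqrt_le_sqrt this
        _ ≤ _ := le_add_of_nonneg_right (Real.sqrt_nonneg _)
    · have h' : a / 2 ≤ ‖θhat z - θ₁‖ := by linarith
      have : ℓ (a / 2) ≤ ℓ ‖θhat z - θ₁‖ := hmono ha2 (norm_nonneg _) h'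
      calc Real.sqrt (ℓ (a / 2)) ≤ Real.sqrt (ℓ ‖θhat z - θ₁‖) := Real.sqrt_le_sqrt this
        _ ≤ _ := le_add_of_nonneg_left (Real.sqrt_nonneg _)
  -- measurability helpers
  have hsm0P0 : AEStronglyMeasurable (fun z => Real.sqrt (ℓ ‖θhat z - θ₀‖)) P₀ :=
    Real.continuous_sqrt.comp_aestronglyMeasurable hint₀.aestronglyMeasurable
  have hsm1P1 : AEStronglyMeasurable (fun z => Real.sqrt (ℓ ‖θhat z - θ₁‖)) P₁ :=
    Real.continuous_sqrt.comp_aestronglyMeasurable hint₁.aestronglyMeasurable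
  have hρm : AEStronglyMeasurable ρ P₀ :=
    (Measure.measurable_rnDeriv P₁ P₀).ennreal_toReal.aestronglyMeasurable
  have sqrt_le_half : ∀ x : ℝ, 0 ≤ x → Real.sqrt x ≤ (1 + x) / 2 := by
    intro x hx
    nlinarith [Real.sq_sqrt hx, Real.sqrt_nonneg x, sq_nonneg (Real.sqrt x - 1)]
  -- integrability of sqrt ℓ₁ under P₁
  have hint_s1 : Integrable (fun z => Real.sqrt (ℓ ‖θhat z - θ₁‖)) P₁ := by
    refine Integrable.mono' (((integrable_const (1:ℝ)).add hint₁).div_const 2) hsm1P1 ?_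
    filter_upwards with z
    rw [Real.norm_eq_abs, abs_of_nonneg (Real.sqrt_nonneg _)]
    exact sqrt_le_half _ (hl1 z)
  -- integrability of ρ * sqrt ℓ₀ under P₀
  have hint_ρs0 : Integrable (fun z => ρ z * Real.sqrt (ℓ ‖θhat z - θ₀‖)) P₀ := by
    refine Integrable.mono' ((hI.add hint₀).div_const 2) (hρm.mul hsm0P0) ?_
    filter_upwards with z
    simp only [Pi.add_apply]
    rw [Real.norm_eq_abs, abs_of_nonneg (mul_nonneg (hρ0 z) (Real.sqrt_nonneg _))]
    nlinarith [sq_nonneg (ρ z - Real.sqrt (ℓ ‖θhat z - θ₀‖)), Real.sq_sqrt (hl0 z)]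
  -- integrability of sqrt ℓ₀ under P₁
  have hint_s0 : Integrable (fun z => Real.sqrt (ℓ ‖θhat z - θ₀‖)) P₁ := by
    rw [← integrable_rnDeriv_smul_iff hac]
    simpa [smul_eq_mul] using hint_ρs0
  -- main chain
  have hchain : Real.sqrt (ℓ (a / 2)) ≤
      (∫ z, Real.sqrt (ℓ ‖θhat z - θ₀‖) ∂P₁) + ∫ z, Real.sqrt (ℓ ‖θhat z - θ₁‖) ∂P₁ := by
    calc Real.sqrt (ℓ (a / 2)) = ∫ _z, Real.sqrt (ℓ (a / 2)) ∂P₁ := by simp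
      _ ≤ ∫ z, (Real.sqrt (ℓ ‖θhat z - θ₀‖) + Real.sqrt (ℓ ‖θhat z - θ₁‖)) ∂P₁ :=
          integral_mono (integrable_const _) (hint_s0.add hint_s1) hpoint
      _ = _ := integral_add hint_s0 hint_s1
  -- Cauchy-Schwarz bound for the P₀ term
  have hsq0 : Integrable (fun z => Real.sqrt (ℓ ‖θhat z - θ₀‖) ^ 2) P₀ := by
    refine hint₀.congr ?_
    filter_upwards with z
    rw [Real.sq_sqrt (hl0 z)]
  have hCS0 : ∫ z, Real.sqrt (ℓ ‖θhat z - θ₀‖) ∂P₁ ≤ Real.sqrt (Iv * δ) := by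
    have heq : ∫ z, Real.sqrt (ℓ ‖θhat z - θ₀‖) ∂P₁ =
        ∫ z, ρ z * Real.sqrt (ℓ ‖θhat z - θ₀‖) ∂P₀ := by
      rw [← integral_rnDeriv_smul hac]
      simp_rw [smul_eq_mul]
      rfl
    rw [heq]
    have hcs := my_cauchy_schwarz P₀ ρ (fun z => Real.sqrt (ℓ ‖θhat z - θ₀‖))
      hρ0 (fun z => Real.sqrt_nonneg _) hI hsq0 hint_ρs0
    have heq2 : ∫ z, Real.sqrt (ℓ ‖θhat z - θ₀‖) ^ 2 ∂P₀ = ∫ z, ℓ ‖θhat z - θ₀‖ ∂P₀ := by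
      refine integral_congr_ae ?_
      filter_upwards with z
      rw [Real.sq_sqrt (hl0 z)]
    rw [heq2] at hcs
    calc ∫ z, ρ z * Real.sqrt (ℓ ‖θhat z - θ₀‖) ∂P₀
        ≤ Real.sqrt Iv * Real.sqrt (∫ z, ℓ ‖θhat z - θ₀‖ ∂P₀) := hcs
      _ ≤ Real.sqrt Iv * Real.sqrt δ :=
          mul_le_mul_of_nonneg_left (Real.sqrt_le_sqrt hrisk) (Real.sqrt_nonneg _)
      _ = Real.sqrt (Iv * δ) := (Real.sqrt_mul hIv0 δ).symm
  -- Cauchy-Schwarz (Jensen) bound for the P₁ term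
  have hsq1 : Integrable (fun z => Real.sqrt (ℓ ‖θhat z - θ₁‖) ^ 2) P₁ := by
    refine hint₁.congr ?_
    filter_upwards with z
    rw [Real.sq_sqrt (hl1 z)]
  have hCS1 : ∫ z, Real.sqrt (ℓ ‖θhat z - θ₁‖) ∂P₁ ≤
      Real.sqrt (∫ z, ℓ ‖θhat z - θ₁‖ ∂P₁) := by
    have hcs := my_cauchy_schwarz P₁ (fun z => Real.sqrt (ℓ ‖θhat z - θ₁‖)) (fun _ => 1)
      (fun z => Real.sqrt_nonneg _) (fun _ => zero_le_one) hsq1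
      (by simpa using (integrable_const (1:ℝ))) (by simpa using hint_s1)
    simp only [mul_one, one_pow] at hcs
    have heq2 : ∫ z, Real.sqrt (ℓ ‖θhat z - θ₁‖) ^ 2 ∂P₁ = ∫ z, ℓ ‖θhat z - θ₁‖ ∂P₁ := by
      refine integral_congr_ae ?_
      filter_upwards with z
      rw [Real.sq_sqrt (hl1 z)]
    simpa [heq2] using hcs
  -- conclude
  have hfinal : Real.sqrt (ℓ (a / 2)) - Real.sqrt (Iv * δ) ≤
      Real.sqrt (∫ z, ℓ ‖θhat z - θ₁‖ ∂P₁) := by linarith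
  have hmax : max (Real.sqrt (ℓ (a / 2)) - Real.sqrt (Iv * δ)) 0 ≤
      Real.sqrt (∫ z, ℓ ‖θhat z - θ₁‖ ∂P₁) :=
    max_le hfinal (Real.sqrt_nonneg _)
  calc (max (Real.sqrt (ℓ (a / 2)) - Real.sqrt (Iv * δ)) 0) ^ 2
      ≤ Real.sqrt (∫ z, ℓ ‖θhat z - θ₁‖ ∂P₁) ^ 2 :=
        pow_le_pow_left₀ (le_max_right _ _) hmax 2
    _ = ∫ z, ℓ ‖θhat z - θ₁‖ ∂P₁ := Real.sq_sqrt hR0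
end

section
/- Constrained risk inequality for power losses with 0 < k ≤ 2: Let P₀, P₁ be probability measures with P₁ ≪ P₀, θ₀, θ₁ ∈ ℝ^m, Δ = ‖θ₀ - θ₁‖, and I = ∫(dP₁/dP₀)² dP₀. If E_{P₀}[‖θ̂ - θ₀‖^k] ≤ δ^k, then E_{P₁}[‖θ̂ - θ₁‖^k] ≥ (max(Δ^{k/2} - (I·δ^k)^{1/2}, 0))². -/
open MeasureTheory ENNReal

private lemma rpow_add_le_add_rpow' {a b p : ℝ} (ha : 0 ≤ a) (hb : 0 ≤ b)
    (hp : 0 ≤ p) (hp1 : p ≤ 1) : (a + b) ^ p ≤ a ^ p + b ^ p := by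
  lift a to NNReal using ha
  lift b to NNReal using hb
  exact_mod_cast NNReal.rpow_add_le_add_rpow a b hp hp1

theorem constrained_risk_inequality_power_low {Z : Type*} [MeasurableSpace Z]
    (P₀ P₁ : Measure Z) [IsProbabilityMeasure P₀] [IsProbabilityMeasure P₁]
    (hac : P₁ ≪ P₀)
    (k : ℝ) (hk0 : 0 < k) (hk2 : k ≤ 2)
    {m : ℕ} (θ₀ θ₁ : EuclideanSpace ℝ (Fin m))
    (θhat : Z → EuclideanSpace ℝ (Fin m)) (hmeas : Measurable θhat)
    (δ : ℝ) (hδ : 0 ≤ δ)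
    (hI : Integrable (fun z => ((P₁.rnDeriv P₀ z).toReal) ^ 2) P₀)
    (hint₀ : Integrable (fun z => ‖θhat z - θ₀‖ ^ k) P₀)
    (hint₁ : Integrable (fun z => ‖θhat z - θ₁‖ ^ k) P₁)
    (hrisk : ∫ z, ‖θhat z - θ₀‖ ^ k ∂P₀ ≤ δ ^ k) :
    (max (‖θ₀ - θ₁‖ ^ (k / 2) -
        Real.sqrt ((∫ z, ((P₁.rnDeriv P₀ z).toReal) ^ 2 ∂P₀) * δ ^ k)) 0) ^ 2
      ≤ ∫ z, ‖θhat z - θ₁‖ ^ k ∂P₁ := by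
  have hconj : Real.HolderConjugate 2 2 := Real.HolderConjugate.two_two
  have h2 : (ENNReal.ofReal 2) = (2 : ℝ≥0∞) := by norm_num
  set ρ : Z → ℝ := fun z => (P₁.rnDeriv P₀ z).toReal with hρdef
  have hρ_meas : Measurable ρ := (Measure.measurable_rnDeriv _ _).ennreal_toReal
  have hρ0 : ∀ z, 0 ≤ ρ z := fun z => ENNReal.toReal_nonneg
  set g : Z → ℝ := fun z => ‖θhat z - θ₀‖ ^ (k / 2) with hgdef
  set h : Z → ℝ := fun z => ‖θhat z - θ₁‖ ^ (k / 2) with hhdef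
  have hg0 : ∀ z, 0 ≤ g z := fun z => Real.rpow_nonneg (norm_nonneg _) _
  have hh0 : ∀ z, 0 ≤ h z := fun z => Real.rpow_nonneg (norm_nonneg _) _
  have hgsq : ∀ z, g z ^ 2 = ‖θhat z - θ₀‖ ^ k := by
    intro z
    rw [hgdef, ← Real.rpow_natCast (_ ^ (k / 2)) 2, ← Real.rpow_mul (norm_nonneg _)]
    norm_num
  have hhsq : ∀ z, h z ^ 2 = ‖θhat z - θ₁‖ ^ k := by
    intro z
    rw [hhdef, ← Real.rpow_natCast (_ ^ (k / 2)) 2, ← Real.rpow_mul (norm_nonneg _)]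
    norm_num
  have hg_meas : Measurable g :=
    (Real.continuous_rpow_const (by positivity)).measurable.comp
      (hmeas.sub measurable_const).norm
  have hh_meas : Measurable h :=
    (Real.continuous_rpow_const (by positivity)).measurable.comp
      (hmeas.sub measurable_const).norm
  -- MemLp facts
  have hρL2 : MemLp ρ 2 P₀ :=
    (memLp_two_iff_integrable_sq hρ_meas.aestronglyMeasurable).mpr hI
  have hgL2 : MemLp g 2 P₀ := by
    refine (memLp_two_iff_integrable_sq hg_meas.aestronglyMeasurable).mpr ?_
    simpa only [hgsq] using hint₀
  have hhL2 : MemLp h 2 P₁ := by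
    refine (memLp_two_iff_integrable_sq hh_meas.aestronglyMeasurable).mpr ?_
    simpa only [hhsq] using hint₁
  -- the product ρ * g is integrable w.r.t. P₀
  have hρg_int : Integrable (fun z => ρ z * g z) P₀ := by
    have hmul : MemLp (ρ • g) 1 P₀ :=
      hgL2.smul hρL2 (hpqr := ⟨by simp [ENNReal.inv_two_add_inv_two]⟩)
    exact memLp_one_iff_integrable.mp (by exact hmul)
  -- g is integrable w.r.t. P₁
  have hg_int₁ : Integrable g P₁ := by
    rw [← integrable_rnDeriv_smul_iff hac]
    simpa [smul_eq_mul] using hρg_int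
  -- h is integrable w.r.t. P₁
  have hh_int₁ : Integrable h P₁ := hhL2.integrable one_le_two
  -- change of measure
  have hchange : ∫ z, g z ∂P₁ = ∫ z, ρ z * g z ∂P₀ := by
    rw [← integral_rnDeriv_smul hac]
    simp [smul_eq_mul]
    rfl
  -- Cauchy-Schwarz on P₀
  have hcs0 : ∫ z, ρ z * g z ∂P₀ ≤
      (∫ z, ρ z ^ (2 : ℝ) ∂P₀) ^ (1 / (2:ℝ)) * (∫ z, g z ^ (2 : ℝ) ∂P₀) ^ (1 / (2:ℝ)) := by
    refine integral_mul_le_Lp_mul_Lq_of_nonneg hconj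
      (Filter.Eventually.of_forall hρ0) (Filter.Eventually.of_forall hg0) ?_ ?_
    · rwa [h2]
    · rwa [h2]
  -- Cauchy-Schwarz on P₁ with constant 1
  have hcs1 : ∫ z, h z * 1 ∂P₁ ≤
      (∫ z, h z ^ (2 : ℝ) ∂P₁) ^ (1 / (2:ℝ)) * (∫ z, (1:ℝ) ^ (2 : ℝ) ∂P₁) ^ (1 / (2:ℝ)) := by
    refine integral_mul_le_Lp_mul_Lq_of_nonneg hconj
      (Filter.Eventually.of_forall hh0)
      (Filter.Eventually.of_forall (fun _ => zero_le_one)) ?_ ?_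
    · rwa [h2]
    · rw [h2]; exact memLp_const 1
  -- abbreviations
  set I : ℝ := ∫ z, ρ z ^ 2 ∂P₀ with hIdef
  set R : ℝ := ∫ z, ‖θhat z - θ₁‖ ^ k ∂P₁ with hRdef
  have hInn : 0 ≤ I := integral_nonneg fun z => sq_nonneg _
  have hRnn : 0 ≤ R := integral_nonneg fun z => Real.rpow_nonneg (norm_nonneg _) _
  have hδk : 0 ≤ δ ^ k := Real.rpow_nonneg hδ _
  have hG0 : 0 ≤ ∫ z, ‖θhat z - θ₀‖ ^ k ∂P₀ :=
    integral_nonneg fun z => Real.rpow_nonneg (norm_nonneg _) _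
  -- bound ∫ g dP₁
  have hbound_g : ∫ z, g z ∂P₁ ≤ Real.sqrt (I * δ ^ k) := by
    rw [hchange]
    refine hcs0.trans ?_
    have e1 : (∫ z, ρ z ^ (2 : ℝ) ∂P₀) = I := by
      simp_rw [Real.rpow_two]
      rfl
    have e2 : (∫ z, g z ^ (2 : ℝ) ∂P₀) = ∫ z, ‖θhat z - θ₀‖ ^ k ∂P₀ := by
      simp_rw [Real.rpow_two]
      exact integral_congr_ae (Filter.Eventually.of_forall fun z => hgsq z)
    rw [e1, e2, Real.sqrt_eq_rpow]
    have hle : I * (∫ z, ‖θhat z - θ₀‖ ^ k ∂P₀) ≤ I * δ ^ k :=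
      mul_le_mul_of_nonneg_left hrisk hInn
    calc I ^ (1 / (2:ℝ)) * (∫ z, ‖θhat z - θ₀‖ ^ k ∂P₀) ^ (1 / (2:ℝ))
        = (I * ∫ z, ‖θhat z - θ₀‖ ^ k ∂P₀) ^ (1 / (2:ℝ)) :=
          (Real.mul_rpow hInn hG0).symm
      _ ≤ (I * δ ^ k) ^ (1 / (2:ℝ)) :=
          Real.rpow_le_rpow (mul_nonneg hInn hG0) hle (by norm_num)
  -- bound ∫ h dP₁
  have hbound_h : ∫ z, h z ∂P₁ ≤ Real.sqrt R := by
    have e3 : (∫ z, h z ^ (2 : ℝ) ∂P₁) = R := by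
      simp_rw [Real.rpow_two]
      exact integral_congr_ae (Filter.Eventually.of_forall fun z => hhsq z)
    have e4 : (∫ z, (1:ℝ) ^ (2 : ℝ) ∂P₁) = 1 := by simp
    have := hcs1
    rw [e3, e4] at this
    simpa [Real.sqrt_eq_rpow] using this
  -- pointwise inequality and the main estimate
  have hkey : ‖θ₀ - θ₁‖ ^ (k / 2) ≤ ∫ z, g z ∂P₁ + ∫ z, h z ∂P₁ := by
    rw [← integral_add hg_int₁ hh_int₁]
    have hconst : ‖θ₀ - θ₁‖ ^ (k / 2) = ∫ _ : Z, ‖θ₀ - θ₁‖ ^ (k / 2) ∂P₁ := by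
      simp
    rw [hconst]
    refine integral_mono (integrable_const _) (hg_int₁.add hh_int₁) fun z => ?_
    have htri : ‖θ₀ - θ₁‖ ≤ ‖θhat z - θ₀‖ + ‖θhat z - θ₁‖ := by
      have := dist_triangle θ₀ (θhat z) θ₁
      simpa [dist_eq_norm, norm_sub_rev (θ₀) (θhat z)] using this
    calc ‖θ₀ - θ₁‖ ^ (k / 2)
        ≤ (‖θhat z - θ₀‖ + ‖θhat z - θ₁‖) ^ (k / 2) :=
          Real.rpow_le_rpow (norm_nonneg _) htri (by positivity)
      _ ≤ ‖θhat z - θ₀‖ ^ (k / 2) + ‖θhat z - θ₁‖ ^ (k / 2) :=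
          rpow_add_le_add_rpow' (norm_nonneg _) (norm_nonneg _) (by positivity)
            (by linarith)
  have hmain : ‖θ₀ - θ₁‖ ^ (k / 2) - Real.sqrt (I * δ ^ k) ≤ Real.sqrt R := by
    linarith [hkey, hbound_g, hbound_h]
  have hmax : max (‖θ₀ - θ₁‖ ^ (k / 2) - Real.sqrt (I * δ ^ k)) 0 ≤ Real.sqrt R :=
    max_le hmain (Real.sqrt_nonneg _)
  calc (max (‖θ₀ - θ₁‖ ^ (k / 2) - Real.sqrt (I * δ ^ k)) 0) ^ 2
      ≤ (Real.sqrt R) ^ 2 := pow_le_pow_left₀ (le_max_right _ _) hmax 2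
    _ = R := Real.sq_sqrt hRnn
end

section
/- Constrained risk inequality for power losses with k ≥ 2: Let P₀, P₁ be probability measures with P₁ ≪ P₀, θ₀, θ₁ ∈ ℝ^m, Δ = ‖θ₀ - θ₁‖, and I = ∫(dP₁/dP₀)² dP₀. If E_{P₀}[‖θ̂ - θ₀‖^k] ≤ δ^k, then E_{P₁}[‖θ̂ - θ₁‖^k] ≥ (max(Δ - (I·δ²)^{1/2}, 0))^k. -/
open MeasureTheory

lemma memLp_of_int_rpow {Z : Type*} [MeasurableSpace Z] {μ : Measure Z} {f : Z → ℝ}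
    (hmeas : AEStronglyMeasurable f μ) (hnn : ∀ z, 0 ≤ f z) {q : ℝ} (hq : 0 < q)
    (hint : Integrable (fun z => f z ^ q) μ) : MemLp f (ENNReal.ofReal q) μ := by
  have hq0 : ENNReal.ofReal q ≠ 0 := by simp [ENNReal.ofReal_eq_zero, not_le, hq]
  refine (memLp_norm_rpow_iff (p := ENNReal.ofReal q) hmeas hq0 ENNReal.ofReal_ne_top).mp ?_
  rw [ENNReal.div_self hq0 ENNReal.ofReal_ne_top, ENNReal.toReal_ofReal hq.le,
    memLp_one_iff_integrable]
  refine hint.congr (Filter.Eventually.of_forall fun z => ?_)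
  simp [Real.norm_of_nonneg (hnn z)]

lemma rpow_int_le {Z : Type*} [MeasurableSpace Z] {μ : Measure Z} [IsProbabilityMeasure μ]
    {f : Z → ℝ} (hmeas : AEStronglyMeasurable f μ) (hnn : ∀ z, 0 ≤ f z) {p q : ℝ}
    (hp : 0 < p) (hpq : p ≤ q) (hint : Integrable (fun z => f z ^ q) μ) :
    (∫ z, f z ^ p ∂μ) ^ (1/p) ≤ (∫ z, f z ^ q ∂μ) ^ (1/q) := by
  have hq : 0 < q := lt_of_lt_of_le hp hpq
  have hLq : MemLp f (ENNReal.ofReal q) μ := memLp_of_int_rpow hmeas hnn hq hint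
  have hLp : MemLp f (ENNReal.ofReal p) μ :=
    hLq.mono_exponent (ENNReal.ofReal_le_ofReal hpq)
  have key := eLpNorm_le_eLpNorm_of_exponent_le (μ := μ)
    (ENNReal.ofReal_le_ofReal hpq) hmeas
  have hp0 : ENNReal.ofReal p ≠ 0 := by simp [ENNReal.ofReal_eq_zero, not_le, hp]
  have hq0 : ENNReal.ofReal q ≠ 0 := by simp [ENNReal.ofReal_eq_zero, not_le, hq]
  rw [hLp.eLpNorm_eq_integral_rpow_norm hp0 ENNReal.ofReal_ne_top,
    hLq.eLpNorm_eq_integral_rpow_norm hq0 ENNReal.ofReal_ne_top,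
    ENNReal.toReal_ofReal hp.le, ENNReal.toReal_ofReal hq.le,
    ENNReal.ofReal_le_ofReal_iff (by positivity)] at key
  have hcong : ∀ r : ℝ, (∫ z, ‖f z‖ ^ r ∂μ) = ∫ z, f z ^ r ∂μ := fun r =>
    integral_congr_ae (Filter.Eventually.of_forall fun z => by
      simp [Real.norm_of_nonneg (hnn z)])
  rw [hcong p, hcong q, ← one_div, ← one_div] at key
  exact key

theorem constrained_risk_inequality_power_high {Z : Type*} [MeasurableSpace Z]
    (P₀ P₁ : Measure Z) [IsProbabilityMeasure P₀] [IsProbabilityMeasure P₁]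
    (hac : P₁ ≪ P₀)
    (k : ℝ) (hk : 2 ≤ k)
    {m : ℕ} (θ₀ θ₁ : EuclideanSpace ℝ (Fin m))
    (θhat : Z → EuclideanSpace ℝ (Fin m)) (hmeas : Measurable θhat)
    (δ : ℝ) (hδ : 0 ≤ δ)
    (hI : Integrable (fun z => ((P₁.rnDeriv P₀ z).toReal) ^ 2) P₀)
    (hint₀ : Integrable (fun z => ‖θhat z - θ₀‖ ^ k) P₀)
    (hint₁ : Integrable (fun z => ‖θhat z - θ₁‖ ^ k) P₁)
    (hrisk : ∫ z, ‖θhat z - θ₀‖ ^ k ∂P₀ ≤ δ ^ k) :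
    (max (‖θ₀ - θ₁‖ -
        Real.sqrt ((∫ z, ((P₁.rnDeriv P₀ z).toReal) ^ 2 ∂P₀) * δ ^ 2)) 0) ^ k
      ≤ ∫ z, ‖θhat z - θ₁‖ ^ k ∂P₁ := by
  have hk0 : (0:ℝ) < k := by linarith
  set ρ : Z → ℝ := fun z => (P₁.rnDeriv P₀ z).toReal with hρ
  set I : ℝ := ∫ z, ρ z ^ 2 ∂P₀ with hIdef
  set Δ : ℝ := ‖θ₀ - θ₁‖ with hΔ
  have hρ_meas : Measurable ρ := (Measure.measurable_rnDeriv P₁ P₀).ennreal_toReal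
  have hρ_nn : ∀ z, 0 ≤ ρ z := fun z => ENNReal.toReal_nonneg
  have hg_meas : Measurable fun z => ‖θhat z - θ₀‖ := (hmeas.sub measurable_const).norm
  have hh_meas : Measurable fun z => ‖θhat z - θ₁‖ := (hmeas.sub measurable_const).norm
  have hnat2 : ∀ x : ℝ, x ^ (2:ℝ) = x ^ (2:ℕ) := fun x => by
    rw [show (2:ℝ) = ((2:ℕ):ℝ) by norm_num, Real.rpow_natCast]
  have hI_nn : 0 ≤ I := integral_nonneg fun z => by positivity
  -- Step A : L² bound at P₀
  have hgk : MemLp (fun z => ‖θhat z - θ₀‖) (ENNReal.ofReal k) P₀ :=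
    memLp_of_int_rpow hg_meas.aestronglyMeasurable (fun z => norm_nonneg _) hk0 hint₀
  have hg2mem : MemLp (fun z => ‖θhat z - θ₀‖) (ENNReal.ofReal 2) P₀ :=
    hgk.mono_exponent (ENNReal.ofReal_le_ofReal hk)
  have hA : (∫ z, ‖θhat z - θ₀‖ ^ (2:ℝ) ∂P₀) ^ (1/(2:ℝ)) ≤ δ := by
    have h1 := rpow_int_le (μ := P₀) hg_meas.aestronglyMeasurable
      (fun z => norm_nonneg _) (by norm_num : (0:ℝ) < 2) hk hint₀
    have h2 : (∫ z, ‖θhat z - θ₀‖ ^ k ∂P₀) ^ (1/k) ≤ (δ ^ k) ^ (1/k) :=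
      Real.rpow_le_rpow (integral_nonneg fun z => by positivity) hrisk (by positivity)
    have h3 : (δ ^ k) ^ (1/k) = δ := by
      rw [← Real.rpow_mul hδ, mul_one_div, div_self hk0.ne', Real.rpow_one]
    linarith
  have hS_nn : 0 ≤ ∫ z, ‖θhat z - θ₀‖ ^ (2:ℝ) ∂P₀ := integral_nonneg fun z => by positivity
  have hS : (∫ z, ‖θhat z - θ₀‖ ^ (2:ℝ) ∂P₀) ^ (1/(2:ℝ)) = Real.sqrt (∫ z, ‖θhat z - θ₀‖ ^ (2:ℝ) ∂P₀) :=
    (Real.sqrt_eq_rpow _).symm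
  -- MemLp ρ 2
  have hρ2 : MemLp ρ (ENNReal.ofReal 2) P₀ := by
    rw [show ENNReal.ofReal 2 = 2 by norm_num]
    exact (memLp_two_iff_integrable_sq hρ_meas.aestronglyMeasurable).mpr hI
  -- Hölder
  have hconj : Real.HolderConjugate 2 2 := Real.HolderConjugate.two_two
  have hold := integral_mul_le_Lp_mul_Lq_of_nonneg (μ := P₀) hconj
    (Filter.Eventually.of_forall hρ_nn)
    (Filter.Eventually.of_forall fun z => norm_nonneg (θhat z - θ₀)) hρ2 hg2mem
  have hρ2int : (∫ z, ρ z ^ (2:ℝ) ∂P₀) = I := by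
    rw [hIdef]; exact integral_congr_ae (Filter.Eventually.of_forall fun z => hnat2 _)
  have hold2 : ∫ z, ρ z * ‖θhat z - θ₀‖ ∂P₀ ≤ Real.sqrt I * δ := by
    refine hold.trans ?_
    rw [hρ2int, ← Real.sqrt_eq_rpow]
    exact mul_le_mul_of_nonneg_left hA (Real.sqrt_nonneg _)
  -- change of measure
  have hchg : ∫ z, ‖θhat z - θ₀‖ ∂P₁ = ∫ z, ρ z * ‖θhat z - θ₀‖ ∂P₀ := by
    rw [← integral_rnDeriv_smul hac (f := fun z => ‖θhat z - θ₀‖)]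
    simp [smul_eq_mul]
    rfl
  have hEg : ∫ z, ‖θhat z - θ₀‖ ∂P₁ ≤ Real.sqrt (I * δ ^ 2) := by
    rw [Real.sqrt_mul hI_nn, Real.sqrt_sq hδ, hchg]
    exact hold2
  -- integrability at P₁
  have hone_le : (1:ENNReal) ≤ ENNReal.ofReal k := ENNReal.one_le_ofReal.mpr (by linarith)
  have hh1 : Integrable (fun z => ‖θhat z - θ₁‖) P₁ := by
    have hm := memLp_of_int_rpow (μ := P₁) hh_meas.aestronglyMeasurable
      (fun z => norm_nonneg _) hk0 hint₁
    exact memLp_one_iff_integrable.mp (hm.mono_exponent hone_le)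
  have hg1 : Integrable (fun z => ‖θhat z - θ₀‖) P₁ := by
    refine (hh1.add (integrable_const Δ)).mono' hg_meas.aestronglyMeasurable
      (Filter.Eventually.of_forall fun z => ?_)
    rw [Real.norm_of_nonneg (norm_nonneg _)]
    calc ‖θhat z - θ₀‖ ≤ ‖θhat z - θ₁‖ + ‖θ₁ - θ₀‖ := norm_sub_le_norm_sub_add_norm_sub _ _ _
      _ = ‖θhat z - θ₁‖ + Δ := by rw [norm_sub_rev θ₁ θ₀, ← hΔ]
  set T : ℝ := ∫ z, ‖θhat z - θ₁‖ ∂P₁ with hT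
  have hT_nn : 0 ≤ T := integral_nonneg fun z => norm_nonneg _
  have htri : Δ ≤ (∫ z, ‖θhat z - θ₀‖ ∂P₁) + T := by
    have h5 : Δ = ∫ x : Z, Δ ∂P₁ := by simp
    rw [h5, hT, ← integral_add hg1 hh1]
    refine integral_mono (integrable_const _) (hg1.add hh1) fun z => ?_
    calc Δ = ‖θ₀ - θ₁‖ := hΔ
      _ ≤ ‖θ₀ - θhat z‖ + ‖θhat z - θ₁‖ := norm_sub_le_norm_sub_add_norm_sub _ _ _
      _ = ‖θhat z - θ₀‖ + ‖θhat z - θ₁‖ := by rw [norm_sub_rev θ₀]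
  have hmaxle : max (Δ - Real.sqrt (I * δ ^ 2)) 0 ≤ T := max_le (by linarith) hT_nn
  have hfin_nn : 0 ≤ ∫ z, ‖θhat z - θ₁‖ ^ k ∂P₁ := integral_nonneg fun z => by positivity
  have h6 : T ≤ (∫ z, ‖θhat z - θ₁‖ ^ k ∂P₁) ^ (1/k) := by
    have := rpow_int_le (μ := P₁) hh_meas.aestronglyMeasurable
      (fun z => norm_nonneg _) (by norm_num : (0:ℝ) < 1) (by linarith) hint₁
    simpa [Real.rpow_one] using this
  have h7 : T ^ k ≤ ∫ z, ‖θhat z - θ₁‖ ^ k ∂P₁ := by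
    calc T ^ k ≤ ((∫ z, ‖θhat z - θ₁‖ ^ k ∂P₁) ^ (1/k)) ^ k :=
          Real.rpow_le_rpow hT_nn h6 hk0.le
      _ = ∫ z, ‖θhat z - θ₁‖ ^ k ∂P₁ := by
          rw [← Real.rpow_mul hfin_nn, one_div, inv_mul_cancel₀ hk0.ne', Real.rpow_one]
  calc (max (Δ - Real.sqrt (I * δ ^ 2)) 0) ^ k ≤ T ^ k :=
        Real.rpow_le_rpow (le_max_right _ 0) hmaxle hk0.le
    _ ≤ _ := h7
end

section
/- Gaussian super-efficiency under 0-1 loss: Fix σ > 0 and c ∈ (0,1). For each n, let P_θⁿ be the n-fold product of N(θ, σ²), let R(θ̂, θ, n) = P_θⁿ(√n |θ̂ - θ| ≥ σ), and Θ_n = {θ ∈ ℝ : 2σ/√n ≤ |θ| ≤ (σ/√n)·√(c log(1/δ_n))}, where δ_n ∈ [0,1] with δ_n → 0. If estimators θ̂_n : ℝⁿ → ℝ satisfy R(θ̂_n, 0, n) ≤ δ_n for all n, then liminf_n inf_{θ ∈ Θ_n} R(θ̂_n, θ, n) = 1. -/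
open MeasureTheory ProbabilityTheory Filter

open MeasureTheory ProbabilityTheory Filter Real

namespace SuperEffAux

variable {σ : ℝ}

instance gaussPM (m x : ℝ) (h : 0 ≤ x) : IsProbabilityMeasure (gaussianReal m ⟨x, h⟩) :=
  instIsProbabilityMeasureGaussianReal m _

lemma gv_ne_zero (hσ : 0 < σ) : (⟨σ ^ 2, sq_nonneg σ⟩ : NNReal) ≠ 0 := by
  intro h
  have := congrArg NNReal.toReal h
  change σ ^ 2 = (0:ℝ) at this
  nlinarith

lemma pdf_ratio (hσ : 0 < σ) (θ x : ℝ) :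
    gaussianPDF θ ⟨σ ^ 2, sq_nonneg σ⟩ x
      = gaussianPDF 0 ⟨σ ^ 2, sq_nonneg σ⟩ x
        * ENNReal.ofReal (rexp (θ * x / σ ^ 2 - θ ^ 2 / (2 * σ ^ 2))) := by
  obtain ⟨v, hv⟩ : ∃ v : NNReal, (⟨σ ^ 2, sq_nonneg σ⟩ : NNReal) = v := ⟨_, rfl⟩
  rw [hv]
  have hv' : (v : ℝ) = σ ^ 2 := by subst hv; rfl
  rw [gaussianPDF, gaussianPDF, ← ENNReal.ofReal_mul (gaussianPDFReal_nonneg _ _ _)]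
  congr 1
  unfold gaussianPDFReal
  simp only [hv', sub_zero]
  conv_rhs => rw [mul_assoc, ← Real.exp_add]
  congr 1
  have h2 : σ ^ 2 ≠ 0 := by positivity
  field_simp
  ring

lemma gauss_wd (hσ : 0 < σ) (θ : ℝ) :
    gaussianReal θ ⟨σ ^ 2, sq_nonneg σ⟩
      = (gaussianReal 0 ⟨σ ^ 2, sq_nonneg σ⟩).withDensity
          (fun x => ENNReal.ofReal (rexp (θ * x / σ ^ 2 - θ ^ 2 / (2 * σ ^ 2)))) := by
  rw [gaussianReal_of_var_ne_zero _ (gv_ne_zero hσ), gaussianReal_of_var_ne_zero _ (gv_ne_zero hσ)]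
  obtain ⟨v, hv⟩ : ∃ v : NNReal, (⟨σ ^ 2, sq_nonneg σ⟩ : NNReal) = v := ⟨_, rfl⟩
  rw [hv]
  rw [← withDensity_mul _ (measurable_gaussianPDF _ _) ((((measurable_id'.const_mul θ).div_const (σ^2)).sub_const _).exp.ennreal_ofReal)]
  congr 1
  ext x
  subst hv
  exact pdf_ratio hσ θ x

lemma lintegral_exp_gauss (hσ : 0 < σ) (t : ℝ) :
    ∫⁻ x, ENNReal.ofReal (rexp (t * x)) ∂ gaussianReal 0 ⟨σ ^ 2, sq_nonneg σ⟩
      = ENNReal.ofReal (rexp (t ^ 2 * σ ^ 2 / 2)) := by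
  rw [gaussianReal_of_var_ne_zero _ (gv_ne_zero hσ)]
  obtain ⟨v, hv⟩ : ∃ v : NNReal, (⟨σ ^ 2, sq_nonneg σ⟩ : NNReal) = v := ⟨_, rfl⟩
  rw [hv]
  have hv' : (v : ℝ) = σ ^ 2 := by subst hv; rfl
  rw [lintegral_withDensity_eq_lintegral_mul _ (measurable_gaussianPDF _ _) ((((measurable_id'.const_mul t)).exp).ennreal_ofReal)]
  have h : ∀ x, (gaussianPDF 0 v * fun x => ENNReal.ofReal (rexp (t * x))) x
      = ENNReal.ofReal (rexp (t ^ 2 * σ ^ 2 / 2))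
        * gaussianPDF (t * σ ^ 2) v x := by
    intro x
    simp only [Pi.mul_apply, gaussianPDF]
    rw [← ENNReal.ofReal_mul (gaussianPDFReal_nonneg _ _ _),
      ← ENNReal.ofReal_mul (Real.exp_nonneg _)]
    congr 1
    unfold gaussianPDFReal
    simp only [hv', sub_zero]
    rw [mul_assoc, ← Real.exp_add]
    conv_rhs => rw [mul_comm (rexp (t ^ 2 * σ ^ 2 / 2)), mul_assoc, ← Real.exp_add]
    congr 2
    have h2 : σ ^ 2 ≠ 0 := by positivity
    field_simp
    ring
  simp_rw [h]
  rw [lintegral_const_mul _ (measurable_gaussianPDF _ _),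
    lintegral_gaussianPDF_eq_one _ (hv ▸ gv_ne_zero hσ), mul_one]

lemma lintegral_pi_prod (μ : Measure ℝ) [SigmaFinite μ] :
    ∀ {n : ℕ} (f : Fin n → ℝ → ENNReal), (∀ i, Measurable (f i)) →
      ∫⁻ x : Fin n → ℝ, ∏ i, f i (x i) ∂ Measure.pi (fun _ => μ)
        = ∏ i, ∫⁻ x, f i x ∂μ := by
  intro n
  induction n with
  | zero =>
    intro f _
    simp [lintegral_const, Measure.pi_univ]
  | succ n ih =>
    intro f hf
    have hmp := (measurePreserving_piFinSuccAbove (fun _ : Fin (n+1) => μ) 0).symm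
    have hG : Measurable fun x : Fin (n+1) → ℝ => ∏ i, f i (x i) :=
      Finset.measurable_prod _ fun i _ => (hf i).comp (measurable_pi_apply i)
    rw [← hmp.lintegral_comp hG]
    simp only [MeasurableEquiv.piFinSuccAbove_symm_apply, Fin.insertNthEquiv,
      Fin.insertNth_zero, Equiv.coe_fn_mk, Fin.prod_univ_succ, Fin.zero_succAbove, cast_eq, Fin.cons_zero, Fin.cons_succ]
    have h2 : ∫⁻ (a : ℝ × (Fin n → ℝ)), f 0 a.1 * ∏ x : Fin n, f x.succ (a.2 x)
          ∂μ.prod (Measure.pi fun _ => μ)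
        = (∫⁻ x, f 0 x ∂μ)
          * ∫⁻ y : Fin n → ℝ, ∏ i : Fin n, f i.succ (y i) ∂Measure.pi fun _ => μ :=
      lintegral_prod_mul (hf 0).aemeasurable
        (Finset.measurable_prod _ fun (i : Fin n) _ => (hf i.succ).comp (measurable_pi_apply i)).aemeasurable
    rw [h2, ih (fun i : Fin n => f i.succ) (fun i => hf i.succ)]


lemma r_meas (σ θ : ℝ) :
    Measurable fun y : ℝ => ENNReal.ofReal (rexp (θ * y / σ ^ 2 - θ ^ 2 / (2 * σ ^ 2))) :=
  (((measurable_id'.const_mul θ).div_const (σ ^ 2)).sub_const _).exp.ennreal_ofReal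

lemma pi_gauss (hσ : 0 < σ) (θ : ℝ) (n : ℕ) :
    Measure.pi (fun _ : Fin n => gaussianReal θ ⟨σ ^ 2, sq_nonneg σ⟩)
      = (Measure.pi fun _ : Fin n => gaussianReal 0 ⟨σ ^ 2, sq_nonneg σ⟩).withDensity
          (fun x => ∏ i, ENNReal.ofReal (rexp (θ * x i / σ ^ 2 - θ ^ 2 / (2 * σ ^ 2)))) := by
  refine Measure.pi_eq fun s hs => ?_
  set r : ℝ → ENNReal := fun y => ENNReal.ofReal (rexp (θ * y / σ ^ 2 - θ ^ 2 / (2 * σ ^ 2)))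
    with hrdef
  rw [withDensity_apply _ (MeasurableSet.univ_pi hs), ← lintegral_indicator
    (MeasurableSet.univ_pi hs)]
  have hind : ∀ x : Fin n → ℝ,
      (Set.pi Set.univ s).indicator (fun x => ∏ i, r (x i)) x
        = ∏ i, ((s i).indicator r) (x i) := by
    intro x
    by_cases hx : x ∈ Set.pi Set.univ s
    · rw [Set.indicator_of_mem hx]
      exact Finset.prod_congr rfl fun i _ =>
        (Set.indicator_of_mem (hx i (Set.mem_univ i)) r).symm
    · rw [Set.indicator_of_notMem hx]
      have hex : ∃ i, x i ∉ s i := by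
        by_contra h
        push_neg at h
        exact hx fun i _ => h i
      obtain ⟨i, hi⟩ := hex
      exact (Finset.prod_eq_zero (Finset.mem_univ i)
        (by simp [Set.indicator_of_notMem hi])).symm
  rw [lintegral_congr hind, lintegral_pi_prod _ (fun i => ((s i).indicator r))
    (fun i => (r_meas σ θ).indicator (hs i))]
  refine Finset.prod_congr rfl fun i _ => ?_
  rw [lintegral_indicator (hs i), gauss_wd hσ θ, withDensity_apply _ (hs i)]

lemma key (hσ : 0 < σ) (θ : ℝ) (n : ℕ) {S : Set (Fin n → ℝ)} (hS : MeasurableSet S) :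
    (Measure.pi fun _ : Fin n => gaussianReal θ ⟨σ ^ 2, sq_nonneg σ⟩) S
      ≤ ENNReal.ofReal (rexp (n * θ ^ 2 / (2 * σ ^ 2)))
        * ((Measure.pi fun _ : Fin n => gaussianReal 0 ⟨σ ^ 2, sq_nonneg σ⟩) S) ^ (1/2 : ℝ) := by
  set P0 := Measure.pi fun _ : Fin n => gaussianReal 0 (⟨σ ^ 2, sq_nonneg σ⟩ : NNReal) with hP0
  set r : ℝ → ENNReal := fun y => ENNReal.ofReal (rexp (θ * y / σ ^ 2 - θ ^ 2 / (2 * σ ^ 2)))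
    with hrdef
  set F : (Fin n → ℝ) → ENNReal := fun x => ∏ i, r (x i) with hFdef
  set G : (Fin n → ℝ) → ENNReal := S.indicator 1 with hGdef
  have hF : Measurable F :=
    Finset.measurable_prod _ fun i _ => (r_meas σ θ).comp (measurable_pi_apply i)
  have hGm : Measurable G := measurable_const.indicator hS
  have step1 : (Measure.pi fun _ : Fin n => gaussianReal θ ⟨σ ^ 2, sq_nonneg σ⟩) S
      = ∫⁻ x, (F * G) x ∂P0 := by
    rw [pi_gauss hσ θ n, withDensity_apply _ hS, ← lintegral_indicator hS]
    refine lintegral_congr fun x => ?_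
    by_cases hx : x ∈ S <;>
      simp [hx, hGdef, hFdef, hrdef, Set.indicator_of_mem, Set.indicator_of_notMem]
  have hA : ∫⁻ x, F x ^ (2:ℝ) ∂P0
      = ENNReal.ofReal (rexp (θ ^ 2 / σ ^ 2)) ^ n := by
    have h2 : ∀ x : Fin n → ℝ, F x ^ (2:ℝ) = ∏ i, (fun y => r y ^ 2) (x i) := by
      intro x
      rw [hFdef]
      rw [show (2:ℝ) = ((2:ℕ):ℝ) by norm_num, ENNReal.rpow_natCast, Finset.prod_pow]
    rw [lintegral_congr h2, lintegral_pi_prod _ (fun _ => fun y => r y ^ 2)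
      (fun _ => (r_meas σ θ).pow_const 2)]
    rw [Finset.prod_const, Finset.card_univ, Fintype.card_fin]
    congr 1
    have hsq : ∀ y, r y ^ 2
        = ENNReal.ofReal (rexp (-(θ ^ 2 / σ ^ 2)))
          * ENNReal.ofReal (rexp (2 * θ / σ ^ 2 * y)) := by
      intro y
      rw [hrdef, sq, ← ENNReal.ofReal_mul (Real.exp_nonneg _), ← Real.exp_add,
        ← ENNReal.ofReal_mul (Real.exp_nonneg _), ← Real.exp_add]
      congr 1
      have h0 : σ ^ 2 ≠ 0 := by positivity
      field_simp
      ring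
    rw [lintegral_congr hsq,
      lintegral_const_mul _ ((measurable_id'.const_mul _).exp.ennreal_ofReal),
      lintegral_exp_gauss hσ (2 * θ / σ ^ 2), ← ENNReal.ofReal_mul (Real.exp_nonneg _),
      ← Real.exp_add]
    congr 1
    have h0 : σ ^ 2 ≠ 0 := by positivity
    field_simp
    ring
  have hB : ∫⁻ x, G x ^ (2:ℝ) ∂P0 = P0 S := by
    have h2 : ∀ x, G x ^ (2:ℝ) = G x := by
      intro x
      rw [hGdef]
      by_cases hx : x ∈ S <;>
        simp [hx, Set.indicator_of_mem, Set.indicator_of_notMem,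
          ENNReal.zero_rpow_of_pos (by norm_num : (0:ℝ) < 2)]
    rw [lintegral_congr h2, hGdef, lintegral_indicator_one hS]
  calc (Measure.pi fun _ : Fin n => gaussianReal θ ⟨σ ^ 2, sq_nonneg σ⟩) S
      = ∫⁻ x, (F * G) x ∂P0 := step1
    _ ≤ (∫⁻ x, F x ^ (2:ℝ) ∂P0) ^ (1/(2:ℝ))
        * (∫⁻ x, G x ^ (2:ℝ) ∂P0) ^ (1/(2:ℝ)) :=
      ENNReal.lintegral_mul_le_Lp_mul_Lq P0 (p := 2) (q := 2)
        Real.HolderConjugate.two_two hF.aemeasurable hGm.aemeasurable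
    _ = ENNReal.ofReal (rexp (n * θ ^ 2 / (2 * σ ^ 2))) * (P0 S) ^ (1/2:ℝ) := by
      rw [hA, hB]
      congr 1
      rw [← ENNReal.ofReal_pow (Real.exp_nonneg _),
        ENNReal.ofReal_rpow_of_pos (by positivity)]
      congr 1
      rw [← Real.exp_nat_mul, ← Real.exp_mul]
      congr 1
      ring

end SuperEffAux


open SuperEffAux in
theorem gaussian_super_efficiency_zero_one_loss
    (σ : ℝ) (hσ : 0 < σ) (c : ℝ) (hc : c ∈ Set.Ioo (0 : ℝ) 1)
    (δ : ℕ → ℝ) (hδ : ∀ n, δ n ∈ Set.Ioc (0 : ℝ) 1)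
    (hδ0 : Tendsto δ atTop (nhds 0))
    (θhat : (n : ℕ) → (Fin n → ℝ) → ℝ) (hmeas : ∀ n, Measurable (θhat n))
    (hsuper : ∀ n,
      ((Measure.pi fun _ : Fin n => gaussianReal 0 ⟨σ ^ 2, sq_nonneg σ⟩)
          {x | σ ≤ Real.sqrt n * |θhat n x - 0|}).toReal ≤ δ n) :
    liminf (fun n =>
        sInf ((fun θ : ℝ =>
            ((Measure.pi fun _ : Fin n => gaussianReal θ ⟨σ ^ 2, sq_nonneg σ⟩)
                {x | σ ≤ Real.sqrt n * |θhat n x - θ|}).toReal) ''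
          {θ : ℝ | 2 * σ / Real.sqrt n ≤ |θ| ∧
            |θ| ≤ σ / Real.sqrt n * Real.sqrt (c * Real.log (1 / δ n))}))
      atTop = 1 := by
  obtain ⟨hc0, hc1⟩ := hc
  have hlow : Tendsto (fun n => 1 - (δ n) ^ ((1 - c)/2 : ℝ)) atTop (nhds 1) := by
    have h1 : Tendsto (fun n => (δ n) ^ ((1 - c)/2 : ℝ)) atTop
        (nhds ((0:ℝ) ^ ((1 - c)/2 : ℝ))) :=
      hδ0.rpow_const (Or.inr (by linarith))
    rw [Real.zero_rpow (ne_of_gt (by linarith : (0:ℝ) < (1 - c)/2))] at h1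
    have h2 := (tendsto_const_nhds (x := (1:ℝ)) (f := atTop)).sub h1
    simpa using h2
  have hev : ∀ᶠ n : ℕ in atTop, 4 ≤ c * Real.log (1 / δ n) := by
    have hsmall : ∀ᶠ n in atTop, δ n < rexp (-(4 / c)) :=
      hδ0.eventually_lt_const (Real.exp_pos _)
    filter_upwards [hsmall] with n hn
    have hlog : Real.log (δ n) < -(4 / c) := by
      calc Real.log (δ n) < Real.log (rexp (-(4 / c))) :=
            Real.log_lt_log (hδ n).1 hn
        _ = -(4 / c) := Real.log_exp _
    have hlog1 : 4 / c ≤ Real.log (1 / δ n) := by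
      rw [one_div, Real.log_inv]
      linarith
    have := mul_le_mul_of_nonneg_left hlog1 hc0.le
    rw [mul_div_cancel₀ _ (ne_of_gt hc0)] at this
    linarith
  have hmain : ∀ᶠ n : ℕ in atTop,
      1 - (δ n) ^ ((1 - c)/2 : ℝ) ≤ sInf ((fun θ : ℝ =>
            ((Measure.pi fun _ : Fin n => gaussianReal θ ⟨σ ^ 2, sq_nonneg σ⟩)
                {x | σ ≤ Real.sqrt n * |θhat n x - θ|}).toReal) ''
          {θ : ℝ | 2 * σ / Real.sqrt n ≤ |θ| ∧
            |θ| ≤ σ / Real.sqrt n * Real.sqrt (c * Real.log (1 / δ n))})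
        ∧ sInf ((fun θ : ℝ =>
            ((Measure.pi fun _ : Fin n => gaussianReal θ ⟨σ ^ 2, sq_nonneg σ⟩)
                {x | σ ≤ Real.sqrt n * |θhat n x - θ|}).toReal) ''
          {θ : ℝ | 2 * σ / Real.sqrt n ≤ |θ| ∧
            |θ| ≤ σ / Real.sqrt n * Real.sqrt (c * Real.log (1 / δ n))}) ≤ 1 := by
    filter_upwards [hev, eventually_ge_atTop 1] with n h4 hn1
    have hδn := hδ n
    have hnpos : (0:ℝ) < (n:ℝ) := by exact_mod_cast Nat.cast_pos.mpr (by omega)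
    have hs : 0 < Real.sqrt n := Real.sqrt_pos.mpr hnpos
    have hLnonneg : 0 ≤ c * Real.log (1 / δ n) := by linarith
    have hsqrt2 : 2 ≤ Real.sqrt (c * Real.log (1 / δ n)) := by
      have : Real.sqrt 4 ≤ Real.sqrt (c * Real.log (1 / δ n)) := Real.sqrt_le_sqrt h4
      rwa [show (4:ℝ) = 2 ^ 2 by norm_num, Real.sqrt_sq (by norm_num : (0:ℝ) ≤ 2)] at this
    set Θ : Set ℝ := {θ : ℝ | 2 * σ / Real.sqrt n ≤ |θ| ∧
        |θ| ≤ σ / Real.sqrt n * Real.sqrt (c * Real.log (1 / δ n))} with hΘdef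
    set f : ℝ → ℝ := fun θ : ℝ =>
        ((Measure.pi fun _ : Fin n => gaussianReal θ ⟨σ ^ 2, sq_nonneg σ⟩)
            {x | σ ≤ Real.sqrt n * |θhat n x - θ|}).toReal with hfdef
    have hθ0mem : (2 * σ / Real.sqrt n) ∈ Θ := by
      have hθ0pos : 0 < 2 * σ / Real.sqrt n := by positivity
      constructor
      · rw [abs_of_pos hθ0pos]
      · rw [abs_of_pos hθ0pos]
        calc 2 * σ / Real.sqrt n = σ / Real.sqrt n * 2 := by ring
          _ ≤ σ / Real.sqrt n * Real.sqrt (c * Real.log (1 / δ n)) := by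
              apply mul_le_mul_of_nonneg_left hsqrt2 (by positivity)
    have hbound : ∀ θ ∈ Θ, 1 - (δ n) ^ ((1 - c)/2 : ℝ) ≤ f θ ∧ f θ ≤ 1 := by
      intro θ hθ
      obtain ⟨hθl, hθu⟩ := hθ
      have hAm : MeasurableSet {x : Fin n → ℝ | σ ≤ Real.sqrt n * |θhat n x - θ|} :=
        measurableSet_le measurable_const (((hmeas n).sub_const θ).abs.const_mul _)
      have hkey := key hσ θ n hAm.compl
      have hsub : {x : Fin n → ℝ | σ ≤ Real.sqrt n * |θhat n x - θ|}ᶜ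
          ⊆ {x : Fin n → ℝ | σ ≤ Real.sqrt n * |θhat n x - 0|} := by
        intro x hx
        simp only [Set.mem_compl_iff, Set.mem_setOf_eq, not_le] at hx ⊢
        rw [sub_zero]
        have habs : |θ| - |θhat n x| ≤ |θhat n x - θ| := by
          have h := abs_sub_abs_le_abs_sub θ (θhat n x)
          rwa [abs_sub_comm] at h
        have h1 : 2 * σ ≤ |θ| * Real.sqrt n := (div_le_iff₀ hs).mp hθl
        nlinarith [mul_le_mul_of_nonneg_left habs hs.le]
      have hP0 : (Measure.pi fun _ : Fin n => gaussianReal 0 ⟨σ ^ 2, sq_nonneg σ⟩)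
          {x : Fin n → ℝ | σ ≤ Real.sqrt n * |θhat n x - θ|}ᶜ ≤ ENNReal.ofReal (δ n) := by
        refine le_trans (measure_mono hsub) ?_
        rw [ENNReal.le_ofReal_iff_toReal_le (measure_ne_top _ _) hδn.1.le]
        exact hsuper n
      have hθ2 : (n:ℝ) * θ ^ 2 / (2 * σ ^ 2) ≤ Real.log (1 / δ n) * (c / 2) := by
        have h1 : |θ| ^ 2 ≤ (σ / Real.sqrt n * Real.sqrt (c * Real.log (1 / δ n))) ^ 2 :=
          pow_le_pow_left₀ (abs_nonneg θ) hθu 2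
        rw [sq_abs, mul_pow, div_pow, Real.sq_sqrt hnpos.le, Real.sq_sqrt hLnonneg] at h1
        have h3 := mul_le_mul_of_nonneg_left h1 hnpos.le
        have h4 : (n:ℝ) * (σ ^ 2 / (n:ℝ) * (c * Real.log (1 / δ n)))
            = σ ^ 2 * (c * Real.log (1 / δ n)) := by
          field_simp
        rw [div_le_iff₀ (by positivity : (0:ℝ) < 2 * σ ^ 2)]
        nlinarith [h3, h4]
      have hexp : rexp ((n:ℝ) * θ ^ 2 / (2 * σ ^ 2)) ≤ (1 / δ n) ^ (c/2 : ℝ) := by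
        rw [Real.rpow_def_of_pos (one_div_pos.mpr hδn.1)]
        exact Real.exp_le_exp.mpr hθ2
      have hfinal : (Measure.pi fun _ : Fin n => gaussianReal θ ⟨σ ^ 2, sq_nonneg σ⟩)
          {x : Fin n → ℝ | σ ≤ Real.sqrt n * |θhat n x - θ|}ᶜ
          ≤ ENNReal.ofReal ((δ n) ^ ((1 - c)/2 : ℝ)) := by
        refine hkey.trans ?_
        calc ENNReal.ofReal (rexp ((n:ℝ) * θ ^ 2 / (2 * σ ^ 2)))
              * ((Measure.pi fun _ : Fin n => gaussianReal 0 ⟨σ ^ 2, sq_nonneg σ⟩)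
                  {x : Fin n → ℝ | σ ≤ Real.sqrt n * |θhat n x - θ|}ᶜ) ^ (1/2 : ℝ)
            ≤ ENNReal.ofReal ((1 / δ n) ^ (c/2 : ℝ))
              * (ENNReal.ofReal (δ n)) ^ (1/2 : ℝ) :=
              mul_le_mul' (ENNReal.ofReal_le_ofReal hexp)
                (ENNReal.rpow_le_rpow hP0 (by norm_num))
          _ = ENNReal.ofReal ((1 / δ n) ^ (c/2 : ℝ) * (δ n) ^ ((1:ℝ)/2)) := by
              rw [ENNReal.ofReal_rpow_of_pos hδn.1,
                ← ENNReal.ofReal_mul (Real.rpow_nonneg (one_div_pos.mpr hδn.1).le _)]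
          _ = ENNReal.ofReal ((δ n) ^ ((1 - c)/2 : ℝ)) := by
              congr 1
              rw [one_div, Real.inv_rpow hδn.1.le, ← Real.rpow_neg hδn.1.le,
                ← Real.rpow_add hδn.1]
              congr 1
              ring
      have hcompl : ((Measure.pi fun _ : Fin n => gaussianReal θ ⟨σ ^ 2, sq_nonneg σ⟩)
          {x : Fin n → ℝ | σ ≤ Real.sqrt n * |θhat n x - θ|}ᶜ).toReal
            ≤ (δ n) ^ ((1 - c)/2 : ℝ) :=
        ENNReal.toReal_le_of_le_ofReal (Real.rpow_nonneg hδn.1.le _) hfinal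
      have hsum : (Measure.pi fun _ : Fin n => gaussianReal θ ⟨σ ^ 2, sq_nonneg σ⟩)
          {x : Fin n → ℝ | σ ≤ Real.sqrt n * |θhat n x - θ|}
            = 1 - (Measure.pi fun _ : Fin n => gaussianReal θ ⟨σ ^ 2, sq_nonneg σ⟩)
              {x : Fin n → ℝ | σ ≤ Real.sqrt n * |θhat n x - θ|}ᶜ := by
        rw [← prob_compl_eq_one_sub hAm.compl, compl_compl]
      have h1' : f θ = 1 - ((Measure.pi fun _ : Fin n => gaussianReal θ ⟨σ ^ 2, sq_nonneg σ⟩)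
          {x : Fin n → ℝ | σ ≤ Real.sqrt n * |θhat n x - θ|}ᶜ).toReal := by
        rw [hfdef]
        simp only []
        rw [hsum, ENNReal.toReal_sub_of_le prob_le_one ENNReal.one_ne_top, ENNReal.toReal_one]
      constructor
      · rw [h1']
        linarith
      · rw [h1']
        have := ENNReal.toReal_nonneg (a := (Measure.pi fun _ : Fin n =>
          gaussianReal θ ⟨σ ^ 2, sq_nonneg σ⟩)
            {x : Fin n → ℝ | σ ≤ Real.sqrt n * |θhat n x - θ|}ᶜ)
        linarith
    have hne : (f '' Θ).Nonempty := ⟨f (2 * σ / Real.sqrt n), Set.mem_image_of_mem f hθ0mem⟩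
    have hbdd : BddBelow (f '' Θ) := by
      refine ⟨0, fun b hb => ?_⟩
      obtain ⟨θ, hθ, rfl⟩ := hb
      exact ENNReal.toReal_nonneg
    constructor
    · refine le_csInf hne ?_
      rintro b ⟨θ, hθ, rfl⟩
      exact (hbound θ hθ).1
    · exact le_trans (csInf_le hbdd (Set.mem_image_of_mem f hθ0mem))
        (hbound _ hθ0mem).2
  have htend : Tendsto (fun n =>
      sInf ((fun θ : ℝ =>
            ((Measure.pi fun _ : Fin n => gaussianReal θ ⟨σ ^ 2, sq_nonneg σ⟩)
                {x | σ ≤ Real.sqrt n * |θhat n x - θ|}).toReal) ''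
          {θ : ℝ | 2 * σ / Real.sqrt n ≤ |θ| ∧
            |θ| ≤ σ / Real.sqrt n * Real.sqrt (c * Real.log (1 / δ n))}))
      atTop (nhds 1) :=
    tendsto_of_tendsto_of_tendsto_of_le_of_le' hlow tendsto_const_nhds
      (hmain.mono fun n h => h.1) (hmain.mono fun n h => h.2)
  exact htend.liminf_eq
end

section
/- Chi-square divergence of tilted distributions: with φ, K, P₀, g as in the tilting construction (φ : ℝ → [0,2] C³ with φ(0)=1, φ'(0)=1, ‖φ'‖_∞ ≤ K, ‖φ''‖_∞ ≤ K; E₀[g]=0, E₀[g²] < ∞) and dP_{t,g} = φ(tg)/C_t dP₀ where C_t = ∫φ(tg)dP₀, one has lim_{t→0} t⁻² χ²(P_{t,g} ‖ P₀) = E₀[g(Z)²], where χ²(P‖Q) = ∫ (dP/dQ - 1)² dQ. -/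
open MeasureTheory Filter

set_option maxHeartbeats 1000000 in
theorem chi_square_divergence_of_tilted_distributions {Z : Type*} [MeasurableSpace Z]
    (P₀ : Measure Z) [IsProbabilityMeasure P₀]
    (φ : ℝ → ℝ) (K : ℝ) (hφC : ContDiff ℝ 3 φ)
    (hrange : ∀ x, φ x ∈ Set.Icc (0 : ℝ) 2)
    (hφ0 : φ 0 = 1) (hφ'0 : deriv φ 0 = 1)
    (hφ' : ∀ x, |deriv φ x| ≤ K) (hφ'' : ∀ x, |deriv (deriv φ) x| ≤ K)
    (g : Z → ℝ) (hg : Measurable g) (hgL2 : MemLp g 2 P₀)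
    (hg0 : ∫ z, g z ∂P₀ = 0)
    (C : ℝ → ℝ) (hC : ∀ t, C t = ∫ z, φ (t * g z) ∂P₀)
    (P : ℝ → Measure Z)
    (hP : ∀ t, P t = P₀.withDensity (fun z => ENNReal.ofReal (φ (t * g z) / C t))) :
    Tendsto (fun t : ℝ =>
        t⁻¹ ^ 2 * ∫ z, (((P t).rnDeriv P₀ z).toReal - 1) ^ 2 ∂P₀)
      (nhdsWithin 0 {0}ᶜ) (nhds (∫ z, (g z) ^ 2 ∂P₀)) := by
  set l : Filter ℝ := nhdsWithin 0 {0}ᶜ with hl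
  have hK0 : 0 ≤ K := le_trans (abs_nonneg _) (hφ' 0)
  set σ2 : ℝ := ∫ z, (g z) ^ 2 ∂P₀ with hσ2def
  have hσ2nn : 0 ≤ σ2 := integral_nonneg fun z => sq_nonneg _
  have hφcont : Continuous φ := hφC.continuous
  have hφdiff : Differentiable ℝ φ := hφC.differentiable (by norm_num)
  have hφ'diff : Differentiable ℝ (deriv φ) := by
    have h2 : ContDiff ℝ 2 (deriv φ) := by
      have h := ContDiff.iterate_deriv' 2 1 (f := φ) (by exact_mod_cast hφC)
      simpa using h
    exact h2.differentiable (by norm_num)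
  -- mean value bounds
  have hA : ∀ x : ℝ, |φ x - 1| ≤ K * |x| := by
    intro x
    have h := Convex.norm_image_sub_le_of_norm_deriv_le (f := φ) (C := K) (s := Set.univ)
      (fun y _ => hφdiff.differentiableAt) (fun y _ => hφ' y) convex_univ (Set.mem_univ 0)
      (Set.mem_univ x)
    simpa [hφ0, Real.norm_eq_abs] using h
  have hB : ∀ x : ℝ, |deriv φ x - 1| ≤ K * |x| := by
    intro x
    have h := Convex.norm_image_sub_le_of_norm_deriv_le (f := deriv φ) (C := K) (s := Set.univ)
      (fun y _ => hφ'diff.differentiableAt) (fun y _ => hφ'' y) convex_univ (Set.mem_univ 0)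
      (Set.mem_univ x)
    simpa [hφ'0, Real.norm_eq_abs] using h
  have hTaylor : ∀ x : ℝ, |φ x - 1 - x| ≤ K * x ^ 2 := by
    intro x
    have hψdiff : ∀ y : ℝ, DifferentiableAt ℝ (fun u : ℝ => φ u - u) y := fun y =>
      (hφdiff y).sub differentiableAt_fun_id
    have hderiv : ∀ y : ℝ, deriv (fun u : ℝ => φ u - u) y = deriv φ y - 1 := by
      intro y
      rw [deriv_fun_sub (hφdiff y) differentiableAt_fun_id]
      simp
    have hbd : ∀ y ∈ Set.Icc (-|x|) |x|, ‖deriv (fun u : ℝ => φ u - u) y‖ ≤ K * |x| := by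
      intro y hy
      rw [hderiv y, Real.norm_eq_abs]
      refine (hB y).trans ?_
      have h1 : |y| ≤ |x| := abs_le.mpr hy
      nlinarith
    have h := Convex.norm_image_sub_le_of_norm_deriv_le (f := fun u : ℝ => φ u - u)
      (C := K * |x|) (s := Set.Icc (-|x|) |x|) (fun y _ => hψdiff y) hbd (convex_Icc _ _)
      (Set.mem_Icc.mpr ⟨neg_nonpos.mpr (abs_nonneg x), abs_nonneg x⟩)
      (Set.mem_Icc.mpr ⟨neg_abs_le x, le_abs_self x⟩)
    have h' : |(φ x - x) - (φ 0 - 0)| ≤ K * |x| * |x - 0| := h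
    rw [hφ0, sub_zero, sub_zero] at h'
    have h2 : |φ x - 1 - x| = |φ x - x - 1| := by
      rw [show φ x - 1 - x = φ x - x - 1 from by ring]
    rw [h2]
    refine h'.trans (le_of_eq ?_)
    rw [← sq_abs x]
    ring
  -- integrability facts
  have hgInt : Integrable g P₀ := hgL2.integrable (by norm_num)
  have hg2Int : Integrable (fun z => (g z) ^ 2) P₀ := hgL2.integrable_sq
  have hφtmeas : ∀ t : ℝ, Measurable fun z => φ (t * g z) := fun t =>
    hφcont.measurable.comp (hg.const_mul t)
  have hφtInt : ∀ t : ℝ, Integrable (fun z => φ (t * g z)) P₀ := by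
    intro t
    refine Integrable.mono' (integrable_const 2) ((hφtmeas t).aestronglyMeasurable) ?_
    refine Eventually.of_forall fun z => ?_
    rw [Real.norm_eq_abs, abs_le]
    exact ⟨le_trans (by norm_num) (hrange (t * g z)).1, (hrange (t * g z)).2⟩
  -- bound on C t - 1
  have hCsub : ∀ t : ℝ, C t - 1 = ∫ z, (φ (t * g z) - 1 - t * g z) ∂P₀ := by
    intro t
    have hint1 : Integrable (fun z => φ (t * g z) - 1) P₀ :=
      (hφtInt t).sub (integrable_const 1)
    have hint2 : Integrable (fun z => t * g z) P₀ := hgInt.const_mul t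
    rw [integral_sub hint1 hint2, integral_sub (hφtInt t) (integrable_const 1),
      integral_const_mul, hg0, hC t]
    simp
  have hCbd : ∀ t : ℝ, |C t - 1| ≤ K * σ2 * t ^ 2 := by
    intro t
    rw [hCsub t]
    have h1 : ∀ z, ‖φ (t * g z) - 1 - t * g z‖ ≤ K * t ^ 2 * (g z) ^ 2 := by
      intro z
      rw [Real.norm_eq_abs]
      calc |φ (t * g z) - 1 - t * g z| ≤ K * (t * g z) ^ 2 := hTaylor _
        _ = K * t ^ 2 * (g z) ^ 2 := by ring
    have h2 := norm_integral_le_integral_norm (μ := P₀) (f := fun z => φ (t * g z) - 1 - t * g z)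
    rw [Real.norm_eq_abs] at h2
    refine h2.trans ?_
    calc ∫ z, ‖φ (t * g z) - 1 - t * g z‖ ∂P₀ ≤ ∫ z, K * t ^ 2 * (g z) ^ 2 ∂P₀ := by
          refine integral_mono (Integrable.norm ?_) (hg2Int.const_mul _) h1
          exact ((hφtInt t).sub (integrable_const 1)).sub (hgInt.const_mul t)
      _ = K * σ2 * t ^ 2 := by rw [integral_const_mul]; ring
  -- choice of t₀
  set t₀ : ℝ := min 1 (1 / (2 * (K * σ2 + 1))) with ht₀def
  have ht₀pos : 0 < t₀ := lt_min one_pos (by positivity)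
  have ht₀le1 : t₀ ≤ 1 := min_le_left _ _
  have hChalf : ∀ t : ℝ, |t| ≤ t₀ → 1 / 2 ≤ C t := by
    intro t ht
    have h1 := hCbd t
    have hKσ : 0 ≤ K * σ2 := mul_nonneg hK0 hσ2nn
    have h2 : K * σ2 * t ^ 2 ≤ 1 / 2 := by
      have ht2 : t ^ 2 ≤ t₀ ^ 2 := by nlinarith [abs_nonneg t, sq_abs t]
      have ht₀2 : t₀ ≤ 1 / (2 * (K * σ2 + 1)) := min_le_right _ _
      have hd : 0 < 2 * (K * σ2 + 1) := by positivity
      have h3 : t₀ * (2 * (K * σ2 + 1)) ≤ 1 := by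
        rw [← le_div_iff₀ hd]
        exact ht₀2
      nlinarith [ht₀pos.le, mul_le_mul_of_nonneg_left ht2 hKσ,
        mul_nonneg hKσ ht₀pos.le, mul_le_mul_of_nonneg_left ht₀le1 (mul_nonneg hKσ ht₀pos.le)]
    have h4 := (abs_le.mp h1).1
    linarith
  have hevsmall : ∀ᶠ t in l, |t| ≤ t₀ := by
    have h : Set.Icc (-t₀) t₀ ∈ nhds (0 : ℝ) := Icc_mem_nhds (by linarith) ht₀pos
    have h2 : ∀ᶠ t in nhds (0 : ℝ), |t| ≤ t₀ := by
      filter_upwards [h] with t ht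
      exact abs_le.mpr ht
    exact h2.filter_mono nhdsWithin_le_nhds
  have hevne : ∀ᶠ t in l, t ≠ 0 := by
    filter_upwards [self_mem_nhdsWithin] with t ht
    exact ht
  -- numerator bound
  have hnum : ∀ (t : ℝ) (z : Z), |φ (t * g z) - C t| ≤ K * |t| * |g z| + K * σ2 * t ^ 2 := by
    intro t z
    have h1 : φ (t * g z) - C t = (φ (t * g z) - 1) - (C t - 1) := by ring
    rw [h1]
    refine (abs_sub _ _).trans ?_
    have h2 : |φ (t * g z) - 1| ≤ K * (|t| * |g z|) := by
      have := hA (t * g z)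
      rwa [abs_mul] at this
    have h3 := hCbd t
    nlinarith
  -- the function F and its bound
  set F : ℝ → Z → ℝ := fun t z => (t⁻¹ * (φ (t * g z) / C t - 1)) ^ 2 with hFdef
  set bound : Z → ℝ := fun z => (2 * K * |g z| + 2 * K * σ2) ^ 2 with hbounddef
  have habs : ∀ (t : ℝ), t ≠ 0 → |t| ≤ t₀ → ∀ z,
      |t⁻¹ * (φ (t * g z) / C t - 1)| ≤ 2 * K * |g z| + 2 * K * σ2 := by
    intro t ht0 htle z
    have hCpos : 0 < C t := lt_of_lt_of_le (by norm_num) (hChalf t htle)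
    have ha : t⁻¹ * (φ (t * g z) / C t - 1) = (φ (t * g z) - C t) / (t * C t) := by
      field_simp
    rw [ha, abs_div, abs_mul, abs_of_pos hCpos]
    have htpos : 0 < |t| := abs_pos.mpr ht0
    rw [div_le_iff₀ (by positivity)]
    have h1 := hnum t z
    have ht1 : |t| ≤ 1 := htle.trans ht₀le1
    have ht2 : t ^ 2 ≤ |t| := by nlinarith [sq_abs t, abs_nonneg t]
    have e2 : K * σ2 * t ^ 2 ≤ K * σ2 * |t| :=
      mul_le_mul_of_nonneg_left ht2 (mul_nonneg hK0 hσ2nn)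
    have hnn : 0 ≤ 2 * K * |g z| + 2 * K * σ2 := by positivity
    have e1 : (2 * K * |g z| + 2 * K * σ2) * (|t| * (1 / 2))
        ≤ (2 * K * |g z| + 2 * K * σ2) * (|t| * C t) :=
      mul_le_mul_of_nonneg_left
        (mul_le_mul_of_nonneg_left (hChalf t htle) (abs_nonneg t)) hnn
    nlinarith [abs_nonneg (g z)]
  have hboundle : ∀ᶠ t in l, ∀ᵐ z ∂P₀, ‖F t z‖ ≤ bound z := by
    filter_upwards [hevne, hevsmall] with t ht0 htle
    refine ae_of_all _ fun z => ?_
    have h1 := habs t ht0 htle z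
    have h3 : |t⁻¹ * (φ (t * g z) / C t - 1)| ^ 2 ≤ (2 * K * |g z| + 2 * K * σ2) ^ 2 :=
      pow_le_pow_left₀ (abs_nonneg _) h1 2
    have h4 : ‖F t z‖ = |t⁻¹ * (φ (t * g z) / C t - 1)| ^ 2 := by
      rw [Real.norm_eq_abs, abs_of_nonneg (sq_nonneg _), sq_abs]
    rw [h4]
    exact h3
  -- integrability of the bound
  have hboundInt : Integrable bound P₀ := by
    have h1 : MemLp (fun z => 2 * K * |g z| + 2 * K * σ2) 2 P₀ := by
      have h2 : MemLp (fun z => (2 * K) * |g z|) 2 P₀ := hgL2.abs.const_mul (2 * K)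
      have h3 := h2.add (memLp_const (2 * K * σ2))
      exact h3
    have h5 := h1.integrable_sq
    simpa [hbounddef, mul_assoc] using h5
  -- measurability
  have hFmeas : ∀ t : ℝ, AEStronglyMeasurable (F t) P₀ := by
    intro t
    apply Measurable.aestronglyMeasurable
    exact ((((hφtmeas t).div_const (C t)).sub_const 1).const_mul t⁻¹).pow_const 2
  -- convergence of C t to 1
  have hCt1 : Tendsto C l (nhds 1) := by
    have h0 : Tendsto (fun t : ℝ => C t - 1) l (nhds 0) := by
      refine squeeze_zero_norm (a := fun t : ℝ => K * σ2 * t ^ 2) (fun t => ?_) ?_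
      · rw [Real.norm_eq_abs]; exact hCbd t
      · have h : Tendsto (fun t : ℝ => K * σ2 * t ^ 2) (nhds 0) (nhds (K * σ2 * 0 ^ 2)) :=
          (continuous_const.mul (continuous_pow 2)).tendsto 0
        simpa using h.mono_left nhdsWithin_le_nhds
    have h1 := h0.add (tendsto_const_nhds (x := (1 : ℝ)) (f := l))
    simpa using h1
  -- t⁻¹ (1 - C t) → 0
  have hslope0 : Tendsto (fun t : ℝ => t⁻¹ * (1 - C t)) l (nhds 0) := by
    refine squeeze_zero_norm' (a := fun t : ℝ => K * σ2 * |t|) ?_ ?_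
    · filter_upwards [hevne] with t ht0
      rw [Real.norm_eq_abs, abs_mul, abs_inv, abs_sub_comm]
      have htpos : 0 < |t| := abs_pos.mpr ht0
      have h1 : |t|⁻¹ * |C t - 1| ≤ |t|⁻¹ * (K * σ2 * t ^ 2) :=
        mul_le_mul_of_nonneg_left (hCbd t) (by positivity)
      refine h1.trans (le_of_eq ?_)
      field_simp
      rw [← sq_abs t]
      ring
    · have h : Tendsto (fun t : ℝ => K * σ2 * |t|) (nhds 0) (nhds (K * σ2 * |0|)) :=
        (continuous_const.mul continuous_abs).tendsto 0
      simpa using h.mono_left nhdsWithin_le_nhds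
  -- pointwise limit
  have hptlim : ∀ z, Tendsto (fun t : ℝ => F t z) l (nhds ((g z) ^ 2)) := by
    intro z
    have hD : HasDerivAt (fun t : ℝ => φ (t * g z)) (g z) 0 := by
      have h1 : HasDerivAt (fun t : ℝ => t * g z) (g z) 0 := by
        simpa using (hasDerivAt_id (0 : ℝ)).mul_const (g z)
      have h2 : HasDerivAt φ 1 ((0 : ℝ) * g z) := by
        have := (hφdiff ((0 : ℝ) * g z)).hasDerivAt
        simpa [hφ'0] using this
      have h3 := h2.comp 0 h1
      rw [one_mul] at h3
      exact h3
    have hs1 : Tendsto (fun t : ℝ => t⁻¹ * (φ (t * g z) - 1)) l (nhds (g z)) := by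
      have h := hasDerivAt_iff_tendsto_slope_zero.mp hD
      simpa [hφ0] using h
    have hlim2 : Tendsto
        (fun t : ℝ => (t⁻¹ * (φ (t * g z) - 1) + t⁻¹ * (1 - C t)) / C t) l (nhds (g z)) := by
      have h := (hs1.add hslope0).div hCt1 one_ne_zero
      rw [add_zero, div_one] at h
      exact h
    have heq : ∀ᶠ t in l, (t⁻¹ * (φ (t * g z) - 1) + t⁻¹ * (1 - C t)) / C t
        = t⁻¹ * (φ (t * g z) / C t - 1) := by
      filter_upwards [hevne, hevsmall] with t ht0 htle
      have hCpos : 0 < C t := lt_of_lt_of_le (by norm_num) (hChalf t htle)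
      field_simp
      ring
    have hlim3 : Tendsto (fun t : ℝ => t⁻¹ * (φ (t * g z) / C t - 1)) l (nhds (g z)) :=
      hlim2.congr' heq
    have h4 := hlim3.pow 2
    exact h4
  -- dominated convergence
  have hmain : Tendsto (fun t => ∫ z, F t z ∂P₀) l (nhds σ2) := by
    refine tendsto_integral_filter_of_dominated_convergence bound
      (Eventually.of_forall hFmeas) hboundle hboundInt (ae_of_all _ hptlim)
  -- identify the integrand with the rnDeriv expression
  refine Tendsto.congr' ?_ hmain
  filter_upwards [hevne, hevsmall] with t ht0 htle
  have hCpos : 0 < C t := lt_of_lt_of_le (by norm_num) (hChalf t htle)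
  have hrn : (P t).rnDeriv P₀ =ᵐ[P₀] fun z => ENNReal.ofReal (φ (t * g z) / C t) := by
    rw [hP t]
    exact Measure.rnDeriv_withDensity P₀
      (ENNReal.measurable_ofReal.comp ((hφtmeas t).div_const _))
  have hint : ∫ z, (((P t).rnDeriv P₀ z).toReal - 1) ^ 2 ∂P₀
      = ∫ z, (φ (t * g z) / C t - 1) ^ 2 ∂P₀ := by
    refine integral_congr_ae ?_
    filter_upwards [hrn] with z hz
    rw [hz, ENNReal.toReal_ofReal (div_nonneg (hrange _).1 hCpos.le)]
  calc ∫ z, F t z ∂P₀ = ∫ z, t⁻¹ ^ 2 * (φ (t * g z) / C t - 1) ^ 2 ∂P₀ := by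
        simp only [hFdef, mul_pow]
    _ = t⁻¹ ^ 2 * ∫ z, (φ (t * g z) / C t - 1) ^ 2 ∂P₀ := integral_const_mul _ _
    _ = t⁻¹ ^ 2 * ∫ z, (((P t).rnDeriv P₀ z).toReal - 1) ^ 2 ∂P₀ := by rw [hint]
end

section
/- Asymptotic bound on the chi-square affinity along shrinking tilts: suppose for each n, t_n² ≤ (c/n)·log(1/δ_n) where δ_n → 0, δ_n ∈ (0,1), c ∈ (0,1), and suppose I_n := I(P_{t_n,g}ⁿ; P₀ⁿ) = (1 + (1 + o(1)) t_n² σ²)ⁿ with σ² ≤ 1. Then limsup_n I_n · δ_n^{c'} < ∞ for every c' > c; consequently, if an estimator sequence satisfies R(θ̂_n, P₀ⁿ) ≤ δ_n under a bounded loss with appropriate separation Δ_n = 1, the constrained risk inequality gives liminf_n R(θ̂_n, P_{t_n,g}ⁿ) = 1 when c < 1. -/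
open Filter

private lemma key_bound
    (c c' : ℝ) (hc0 : 0 < c) (hcc : c < c')
    (σsq : ℝ) (hσ0 : 0 ≤ σsq) (hσ1 : σsq ≤ 1)
    (δ : ℕ → ℝ) (hδ : ∀ n, δ n ∈ Set.Ioo (0 : ℝ) 1)
    (t : ℕ → ℝ) (ht : ∀ n, (t n) ^ 2 ≤ c / n * Real.log (1 / δ n))
    (e : ℕ → ℝ) (he : Tendsto e atTop (nhds 0))
    (I : ℕ → ℝ) (hI : ∀ n, I n = (1 + (1 + e n) * (t n) ^ 2 * σsq) ^ n) :
    ∀ᶠ n in atTop, I n * δ n ^ c' ≤ 1 := by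
  have hε : 0 < c' / c - 1 := by
    rw [sub_pos, lt_div_iff₀ hc0, one_mul]; exact hcc
  filter_upwards [he.eventually_lt_const hε,
    he.eventually_const_lt (show (-1:ℝ) < 0 by norm_num),
    eventually_ge_atTop 1] with n h1 h2 hn
  obtain ⟨hδp, hδ1⟩ := hδ n
  set L := Real.log (1 / δ n) with hLdef
  have hL : 0 ≤ L := Real.log_nonneg (by rw [le_div_iff₀ hδp]; linarith)
  have hN : (1:ℝ) ≤ (n:ℝ) := by exact_mod_cast hn
  set x := (1 + e n) * (t n) ^ 2 * σsq with hxdef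
  have ha : (0:ℝ) < 1 + e n := by linarith
  have hx0 : 0 ≤ x := mul_nonneg (mul_nonneg ha.le (sq_nonneg _)) hσ0
  have hcn : 0 ≤ c / n * L := mul_nonneg (div_nonneg hc0.le (by positivity)) hL
  have hxle : x ≤ c' / n * L := by
    have h2' : x ≤ (1 + e n) * (t n) ^ 2 := by
      nlinarith [mul_nonneg ha.le (sq_nonneg (t n))]
    have h3 : (1 + e n) * (t n) ^ 2 ≤ (1 + e n) * (c / n * L) :=
      mul_le_mul_of_nonneg_left (ht n) ha.le
    have h4 : (1 + e n) * (c / n * L) ≤ (c' / c) * (c / n * L) :=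
      mul_le_mul_of_nonneg_right (by linarith) hcn
    have h5 : (c' / c) * (c / n * L) = c' / n * L := by
      field_simp
    linarith
  have hNpos : (0:ℝ) < (n:ℝ) := by linarith
  have hIle : I n ≤ Real.exp (c' * L) := by
    rw [hI n]
    calc (1 + x) ^ n ≤ (Real.exp x) ^ n :=
          pow_le_pow_left₀ (by linarith) (by linarith [Real.add_one_le_exp x]) n
      _ = Real.exp (n * x) := by rw [← Real.exp_nat_mul]
      _ ≤ Real.exp (c' * L) := by
          apply Real.exp_le_exp.2
          have h6 := mul_le_mul_of_nonneg_left hxle hNpos.le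
          have h7 : (n:ℝ) * (c' / n * L) = c' * L := by
            field_simp
          linarith
  have hrp : Real.exp (c' * L) = δ n ^ (-c') := by
    rw [Real.rpow_def_of_pos hδp]
    congr 1
    rw [hLdef, one_div, Real.log_inv]; ring
  calc I n * δ n ^ c' ≤ δ n ^ (-c') * δ n ^ c' :=
        mul_le_mul_of_nonneg_right (hrp ▸ hIle) (Real.rpow_nonneg hδp.le _)
    _ = 1 := by rw [← Real.rpow_add hδp]; simp

theorem asymptotic_chi_square_affinity_bound
    (c : ℝ) (hc : c ∈ Set.Ioo (0 : ℝ) 1)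
    (σsq : ℝ) (hσ0 : 0 ≤ σsq) (hσ1 : σsq ≤ 1)
    (δ : ℕ → ℝ) (hδ : ∀ n, δ n ∈ Set.Ioo (0 : ℝ) 1)
    (hδ0 : Tendsto δ atTop (nhds 0))
    (t : ℕ → ℝ) (ht : ∀ n, (t n) ^ 2 ≤ c / n * Real.log (1 / δ n))
    (e : ℕ → ℝ) (he : Tendsto e atTop (nhds 0))
    (I : ℕ → ℝ) (hI : ∀ n, I n = (1 + (1 + e n) * (t n) ^ 2 * σsq) ^ n) :
    (∀ c' : ℝ, c < c' → ∃ M : ℝ, ∀ᶠ n in atTop, I n * δ n ^ c' ≤ M) ∧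
      (∀ R : ℕ → ℝ,
        (∀ n, (max (1 - Real.sqrt (I n * δ n)) 0) ^ 2 ≤ R n) →
        (∀ n, R n ≤ 1) →
        liminf R atTop = 1) := by
  obtain ⟨hc0, hc1⟩ := hc
  constructor
  · intro c' hcc
    exact ⟨1, key_bound c c' hc0 hcc σsq hσ0 hσ1 δ hδ t ht e he I hI⟩
  · intro R hRl hRu
    set c' : ℝ := (c + 1) / 2 with hc'def
    have hcc : c < c' := by rw [hc'def]; linarith
    have hc'1 : 0 < 1 - c' := by rw [hc'def]; linarith
    have hkey := key_bound c c' hc0 hcc σsq hσ0 hσ1 δ hδ t ht e he I hI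
    have hlow : ∀ᶠ n in atTop, 0 ≤ I n := by
      filter_upwards [he.eventually_const_lt (show (-1:ℝ) < 0 by norm_num)] with n h
      rw [hI n]
      exact pow_nonneg (by nlinarith [mul_nonneg (mul_nonneg
        (show (0:ℝ) ≤ 1 + e n by linarith) (sq_nonneg (t n))) hσ0]) n
    have hIδ : Tendsto (fun n => I n * δ n) atTop (nhds 0) := by
      have hup : Tendsto (fun n => δ n ^ ((1:ℝ) - c')) atTop (nhds 0) := by
        have := hδ0.rpow_const (p := 1 - c') (Or.inr hc'1.le)
        simpa [Real.zero_rpow (ne_of_gt hc'1)] using this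
      apply tendsto_of_tendsto_of_tendsto_of_le_of_le' tendsto_const_nhds hup
      · filter_upwards [hlow] with n h
        exact mul_nonneg h (hδ n).1.le
      · filter_upwards [hkey] with n h1
        have hδp := (hδ n).1
        have hsplit : δ n ^ c' * δ n ^ ((1:ℝ) - c') = δ n := by
          rw [← Real.rpow_add hδp]
          norm_num
        calc I n * δ n = (I n * δ n ^ c') * δ n ^ ((1:ℝ) - c') := by
              rw [mul_assoc, hsplit]
          _ ≤ 1 * δ n ^ ((1:ℝ) - c') :=
              mul_le_mul_of_nonneg_right h1 (Real.rpow_nonneg hδp.le _)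
          _ = δ n ^ ((1:ℝ) - c') := one_mul _
    have hg : Tendsto (fun n => (max (1 - Real.sqrt (I n * δ n)) 0) ^ 2)
        atTop (nhds 1) := by
      have hs : Tendsto (fun n => Real.sqrt (I n * δ n)) atTop (nhds 0) := by
        have := (Real.continuous_sqrt.tendsto 0).comp hIδ
        simpa [Function.comp_def] using this
      have h1 : Tendsto (fun n => 1 - Real.sqrt (I n * δ n)) atTop (nhds 1) := by
        simpa using (tendsto_const_nhds (x := (1:ℝ))).sub hs
      have hm : Tendsto (fun n => max (1 - Real.sqrt (I n * δ n)) 0)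
          atTop (nhds 1) := by
        simpa using h1.max (tendsto_const_nhds (x := (0:ℝ)))
      simpa using hm.pow 2
    have hRb : IsBoundedUnder (· ≥ ·) atTop R :=
      isBoundedUnder_of ⟨0, fun n => le_trans (sq_nonneg _) (hRl n)⟩
    have hRcob : IsCoboundedUnder (· ≥ ·) atTop R :=
      IsBoundedUnder.isCoboundedUnder_ge (isBoundedUnder_of ⟨1, fun n => hRu n⟩)
    refine le_antisymm ?_ ?_
    · exact liminf_le_of_frequently_le
        (Eventually.frequently (Eventually.of_forall hRu)) hRb
    · rw [← hg.liminf_eq]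
      exact liminf_le_liminf (Eventually.of_forall hRl)
        (isBoundedUnder_of ⟨0, fun n => sq_nonneg _⟩) hRcob
end
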